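/- Let X be a radical object of C₂(P). Then Ext¹_{C₂(P)}(X, X^*)_{K_{X¹} ⊕ K^*_{X⁰}} — the set of equivalence classes of short exact sequences 0 → X^* → Z → X → 0 in C₂(P) whose middle term Z is isomorphic to K_{X¹} ⊕ K^*_{X⁰} — is in bijection with the group Aut_{K₂(P)}(X) of automorphisms of X in K₂(P). -/

import Mathlib

open CategoryTheory

universe u

noncomputable section

variable (R : Type u) [Ring R]

structure TwoCx : Type (u + 1) where
  X1 : ModuleCat.{u} R
  X0 : ModuleCat.{u} R
  fin1 : Module.Finite R X1
  proj1 : Module.Projective R X1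
  fin0 : Module.Finite R X0
  proj0 : Module.Projective R X0
  d1 : X1 ⟶ X0
  d0 : X0 ⟶ X1
  dd1 : d1 ≫ d0 = 0
  dd0 : d0 ≫ d1 = 0

variable {R}

@[ext]
structure TwoHom (X Y : TwoCx R) : Type u where
  f1 : X.X1 ⟶ Y.X1
  f0 : X.X0 ⟶ Y.X0
  comm1 : X.d1 ≫ f0 = f1 ≫ Y.d1
  comm0 : X.d0 ≫ f1 = f0 ≫ Y.d0

instance : CategoryStruct (TwoCx R) where
  Hom := TwoHom
  id X := ⟨𝟙 X.X1, 𝟙 X.X0, by simp, by simp⟩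
  comp {X Y Z} f g :=
    ⟨f.f1 ≫ g.f1, f.f0 ≫ g.f0, by
      rw [← Category.assoc, f.comm1, Category.assoc, g.comm1, ← Category.assoc], by
      rw [← Category.assoc, f.comm0, Category.assoc, g.comm0, ← Category.assoc]⟩

@[simp] theorem id_f1 (X : TwoCx R) : TwoHom.f1 (𝟙 X) = 𝟙 X.X1 := rfl
@[simp] theorem id_f0 (X : TwoCx R) : TwoHom.f0 (𝟙 X) = 𝟙 X.X0 := rfl
@[simp] theorem comp_f1 {X Y Z : TwoCx R} (f : X ⟶ Y) (g : Y ⟶ Z) :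
    TwoHom.f1 (f ≫ g) = TwoHom.f1 f ≫ TwoHom.f1 g := rfl
@[simp] theorem comp_f0 {X Y Z : TwoCx R} (f : X ⟶ Y) (g : Y ⟶ Z) :
    TwoHom.f0 (f ≫ g) = TwoHom.f0 f ≫ TwoHom.f0 g := rfl

@[ext] theorem hom_ext {X Y : TwoCx R} {f g : X ⟶ Y}
    (h1 : TwoHom.f1 f = TwoHom.f1 g) (h0 : TwoHom.f0 f = TwoHom.f0 g) : f = g :=
  TwoHom.ext h1 h0

instance : Category (TwoCx R) where
  id_comp f := by ext <;> simp
  comp_id f := by ext <;> simp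
  assoc f g h := by ext <;> simp

section HomGroup

variable {X Y : TwoCx R}

instance : Zero (X ⟶ Y) :=
  ⟨TwoHom.mk 0 0 (by simp) (by simp)⟩

@[simp] theorem zero_f1 : TwoHom.f1 (0 : X ⟶ Y) = 0 := rfl
@[simp] theorem zero_f0 : TwoHom.f0 (0 : X ⟶ Y) = 0 := rfl

instance : Add (X ⟶ Y) :=
  ⟨fun f g => TwoHom.mk (f.f1 + g.f1) (f.f0 + g.f0)
    (by rw [Preadditive.comp_add, f.comm1, g.comm1, ← Preadditive.add_comp])
    (by rw [Preadditive.comp_add, f.comm0, g.comm0, ← Preadditive.add_comp])⟩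

@[simp] theorem add_f1 (f g : X ⟶ Y) :
    TwoHom.f1 (f + g) = TwoHom.f1 f + TwoHom.f1 g := rfl
@[simp] theorem add_f0 (f g : X ⟶ Y) :
    TwoHom.f0 (f + g) = TwoHom.f0 f + TwoHom.f0 g := rfl

instance : Neg (X ⟶ Y) :=
  ⟨fun f => TwoHom.mk (-f.f1) (-f.f0)
    (by rw [Preadditive.comp_neg, f.comm1, ← Preadditive.neg_comp])
    (by rw [Preadditive.comp_neg, f.comm0, ← Preadditive.neg_comp])⟩

@[simp] theorem neg_f1 (f : X ⟶ Y) : TwoHom.f1 (-f) = -TwoHom.f1 f := rfl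
@[simp] theorem neg_f0 (f : X ⟶ Y) : TwoHom.f0 (-f) = -TwoHom.f0 f := rfl

instance : AddCommGroup (X ⟶ Y) where
  add := (· + ·)
  zero := 0
  neg := Neg.neg
  add_assoc a b c := by ext <;> simp [add_assoc]
  zero_add a := by ext <;> simp
  add_zero a := by ext <;> simp
  add_comm a b := by ext <;> simp [add_comm]
  neg_add_cancel a := by ext <;> simp
  nsmul := nsmulRec
  zsmul := zsmulRec

@[simp] theorem sub_f1 (f g : X ⟶ Y) :
    TwoHom.f1 (f - g) = TwoHom.f1 f - TwoHom.f1 g := by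
  show TwoHom.f1 (f + -g) = _
  rw [add_f1, neg_f1, sub_eq_add_neg]

@[simp] theorem sub_f0 (f g : X ⟶ Y) :
    TwoHom.f0 (f - g) = TwoHom.f0 f - TwoHom.f0 g := by
  show TwoHom.f0 (f + -g) = _
  rw [add_f0, neg_f0, sub_eq_add_neg]

end HomGroup

instance : Preadditive (TwoCx R) where
  add_comp := by intros; ext <;> simp
  comp_add := by intros; ext <;> simp

def Homotopic {X Y : TwoCx R} (f g : X ⟶ Y) : Prop :=
  ∃ (h1 : X.X1 ⟶ Y.X0) (h0 : X.X0 ⟶ Y.X1),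
    TwoHom.f1 f - TwoHom.f1 g = h1 ≫ Y.d0 + X.d1 ≫ h0 ∧
    TwoHom.f0 f - TwoHom.f0 g = h0 ≫ Y.d1 + X.d0 ≫ h1

def Contractible (X : TwoCx R) : Prop := Homotopic (𝟙 X) (0 : X ⟶ X)

def IsHtpEquiv {X Y : TwoCx R} (f : X ⟶ Y) : Prop :=
  ∃ g : Y ⟶ X, Homotopic (f ≫ g) (𝟙 X) ∧ Homotopic (g ≫ f) (𝟙 Y)

def HtpEquiv (X Y : TwoCx R) : Prop := ∃ f : X ⟶ Y, IsHtpEquiv f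

def modRad (M : ModuleCat.{u} R) : Submodule R M :=
  sInf {N : Submodule R M | IsCoatom N}

def RadicalCx (X : TwoCx R) : Prop :=
  LinearMap.range X.d1.hom ≤ modRad X.X0 ∧ LinearMap.range X.d0.hom ≤ modRad X.X1

def dsum (X Y : TwoCx R) : TwoCx R where
  X1 := ModuleCat.of R (X.X1 × Y.X1)
  X0 := ModuleCat.of R (X.X0 × Y.X0)
  fin1 := by haveI := X.fin1; haveI := Y.fin1; exact (inferInstance : Module.Finite R (X.X1 × Y.X1))
  proj1 := by haveI := X.proj1; haveI := Y.proj1; exact (inferInstance : Module.Projective R (X.X1 × Y.X1))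
  fin0 := by haveI := X.fin0; haveI := Y.fin0; exact (inferInstance : Module.Finite R (X.X0 × Y.X0))
  proj0 := by haveI := X.proj0; haveI := Y.proj0; exact (inferInstance : Module.Projective R (X.X0 × Y.X0))
  d1 := ModuleCat.ofHom (LinearMap.prodMap X.d1.hom Y.d1.hom)
  d0 := ModuleCat.ofHom (LinearMap.prodMap X.d0.hom Y.d0.hom)
  dd1 := by
    have h1 : LinearMap.comp X.d0.hom X.d1.hom = 0 := by rw [← ModuleCat.hom_comp, X.dd1]; rfl
    have h2 : LinearMap.comp Y.d0.hom Y.d1.hom = 0 := by rw [← ModuleCat.hom_comp, Y.dd1]; rfl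
    apply ModuleCat.hom_ext
    show LinearMap.comp (LinearMap.prodMap X.d0.hom Y.d0.hom) (LinearMap.prodMap X.d1.hom Y.d1.hom) = 0
    rw [LinearMap.prodMap_comp, h1, h2, LinearMap.prodMap_zero]
  dd0 := by
    have h1 : LinearMap.comp X.d1.hom X.d0.hom = 0 := by rw [← ModuleCat.hom_comp, X.dd0]; rfl
    have h2 : LinearMap.comp Y.d1.hom Y.d0.hom = 0 := by rw [← ModuleCat.hom_comp, Y.dd0]; rfl
    apply ModuleCat.hom_ext
    show LinearMap.comp (LinearMap.prodMap X.d1.hom Y.d1.hom) (LinearMap.prodMap X.d0.hom Y.d0.hom) = 0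
    rw [LinearMap.prodMap_comp, h1, h2, LinearMap.prodMap_zero]

def kP (P : ModuleCat.{u} R) (h1 : Module.Finite R P) (h2 : Module.Projective R P) : TwoCx R :=
  ⟨P, P, h1, h2, h1, h2, 𝟙 P, 0, by simp, by simp⟩

def kS (P : ModuleCat.{u} R) (h1 : Module.Finite R P) (h2 : Module.Projective R P) : TwoCx R :=
  ⟨P, P, h1, h2, h1, h2, 0, 𝟙 P, by simp, by simp⟩

def starCx (X : TwoCx R) : TwoCx R :=
  ⟨X.X0, X.X1, X.fin0, X.proj0, X.fin1, X.proj1, -X.d0, -X.d1,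
    by simp [X.dd0], by simp [X.dd1]⟩

-- ## The homotopy category
variable (R) in
def htpRel : HomRel (TwoCx R) := fun _ _ f g => Homotopic f g

abbrev KTwo (R : Type u) [Ring R] := CategoryTheory.Quotient (htpRel R)

def KFun (R : Type u) [Ring R] : TwoCx R ⥤ KTwo R := Quotient.functor _

-- ## Short exact sequences
structure SESData (Y Z X : TwoCx R) where
  a : Y ⟶ Z
  b : Z ⟶ X
  inj1 : Function.Injective (TwoHom.f1 a)
  inj0 : Function.Injective (TwoHom.f0 a)
  surj1 : Function.Surjective (TwoHom.f1 b)
  surj0 : Function.Surjective (TwoHom.f0 b)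
  exact1 : LinearMap.range (TwoHom.f1 a).hom = LinearMap.ker (TwoHom.f1 b).hom
  exact0 : LinearMap.range (TwoHom.f0 a).hom = LinearMap.ker (TwoHom.f0 b).hom

def SESEquiv {Y X Z Z' : TwoCx R} (s : SESData Y Z X) (t : SESData Y Z' X) : Prop :=
  ∃ e : Z ≅ Z', s.a ≫ e.hom = t.a ∧ e.hom ≫ t.b = s.b

/-- The two components of a morphism `X ⟶ Y^*`, with their natural types. -/
def sf1 {X Y : TwoCx R} (f : X ⟶ starCx Y) : X.X1 →ₗ[R] Y.X0 := (TwoHom.f1 f).hom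
def sf0 {X Y : TwoCx R} (f : X ⟶ starCx Y) : X.X0 →ₗ[R] Y.X1 := (TwoHom.f0 f).hom

-- ## The middle term associated to `f : X ⟶ Y^*`
def coneCx {X Y : TwoCx R} (f : X ⟶ starCx Y) : TwoCx R where
  X1 := ModuleCat.of R (X.X1 × Y.X1)
  X0 := ModuleCat.of R (X.X0 × Y.X0)
  fin1 := by haveI := X.fin1; haveI := Y.fin1; exact (inferInstance : Module.Finite R (X.X1 × Y.X1))
  proj1 := by haveI := X.proj1; haveI := Y.proj1; exact (inferInstance : Module.Projective R (X.X1 × Y.X1))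
  fin0 := by haveI := X.fin0; haveI := Y.fin0; exact (inferInstance : Module.Finite R (X.X0 × Y.X0))
  proj0 := by haveI := X.proj0; haveI := Y.proj0; exact (inferInstance : Module.Projective R (X.X0 × Y.X0))
  d1 := ModuleCat.ofHom (LinearMap.prod (X.d1.hom ∘ₗ LinearMap.fst R X.X1 Y.X1)
    (Y.d1.hom ∘ₗ LinearMap.snd R X.X1 Y.X1 - sf1 f ∘ₗ LinearMap.fst R X.X1 Y.X1))
  d0 := ModuleCat.ofHom (LinearMap.prod (X.d0.hom ∘ₗ LinearMap.fst R X.X0 Y.X0)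
    (Y.d0.hom ∘ₗ LinearMap.snd R X.X0 Y.X0 - sf0 f ∘ₗ LinearMap.fst R X.X0 Y.X0))
  dd1 := by
    apply ModuleCat.hom_ext
    refine LinearMap.ext fun p => Prod.ext ?_ ?_
    · show X.d0 (X.d1 p.1) = 0
      exact LinearMap.congr_fun (congrArg ModuleCat.Hom.hom X.dd1) p.1
    · show Y.d0 (Y.d1 p.2 - sf1 f p.1) - sf0 f (X.d1 p.1) = 0
      have hY : Y.d0 (Y.d1 p.2) = 0 := LinearMap.congr_fun (congrArg ModuleCat.Hom.hom Y.dd1) p.2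
      have hc : sf0 f (X.d1 p.1) = -(Y.d0 (sf1 f p.1)) := LinearMap.congr_fun (congrArg ModuleCat.Hom.hom f.comm1) p.1
      rw [map_sub, hY, hc]
      simp
  dd0 := by
    apply ModuleCat.hom_ext
    refine LinearMap.ext fun p => Prod.ext ?_ ?_
    · show X.d1 (X.d0 p.1) = 0
      exact LinearMap.congr_fun (congrArg ModuleCat.Hom.hom X.dd0) p.1
    · show Y.d1 (Y.d0 p.2 - sf0 f p.1) - sf1 f (X.d0 p.1) = 0
      have hY : Y.d1 (Y.d0 p.2) = 0 := LinearMap.congr_fun (congrArg ModuleCat.Hom.hom Y.dd0) p.2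
      have hc : sf1 f (X.d0 p.1) = -(Y.d1 (sf0 f p.1)) := LinearMap.congr_fun (congrArg ModuleCat.Hom.hom f.comm0) p.1
      rw [map_sub, hY, hc]
      simp

/-- The canonical inclusion `Y ⟶ Z_f`. -/
def coneIn {X Y : TwoCx R} (f : X ⟶ starCx Y) : Y ⟶ coneCx f where
  f1 := ModuleCat.ofHom (LinearMap.inr R X.X1 Y.X1)
  f0 := ModuleCat.ofHom (LinearMap.inr R X.X0 Y.X0)
  comm1 := by
    apply ModuleCat.hom_ext
    refine LinearMap.ext fun y => Prod.ext ?_ ?_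
    · show (0 : X.X0) = X.d1 0
      simp
    · show Y.d1 y = Y.d1 y - sf1 f 0
      simp
  comm0 := by
    apply ModuleCat.hom_ext
    refine LinearMap.ext fun y => Prod.ext ?_ ?_
    · show (0 : X.X1) = X.d0 0
      simp
    · show Y.d0 y = Y.d0 y - sf0 f 0
      simp

/-- The canonical projection `Z_f ⟶ X`. -/
def coneOut {X Y : TwoCx R} (f : X ⟶ starCx Y) : coneCx f ⟶ X where
  f1 := ModuleCat.ofHom (LinearMap.fst R X.X1 Y.X1)
  f0 := ModuleCat.ofHom (LinearMap.fst R X.X0 Y.X0)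
  comm1 := ModuleCat.hom_ext (LinearMap.ext fun _ => rfl)
  comm0 := ModuleCat.hom_ext (LinearMap.ext fun _ => rfl)

/-- The canonical short exact sequence `0 ⟶ Y ⟶ Z_f ⟶ X ⟶ 0`. -/
def canonSES {X Y : TwoCx R} (f : X ⟶ starCx Y) : SESData Y (coneCx f) X where
  a := coneIn f
  b := coneOut f
  inj1 := LinearMap.inr_injective
  inj0 := LinearMap.inr_injective
  surj1 := LinearMap.fst_surjective
  surj0 := LinearMap.fst_surjective
  exact1 := LinearMap.range_inr R X.X1 Y.X1
  exact0 := LinearMap.range_inr R X.X0 Y.X0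

-- ## scalar endomorphisms
def scalarMod [Algebra ℂ R] (c : ℂ) (M : ModuleCat.{u} R) : M ⟶ M :=
  ModuleCat.ofHom
  { toFun := fun m => algebraMap ℂ R c • m
    map_add' := fun x y => smul_add _ x y
    map_smul' := fun r m => by
      simp only [RingHom.id_apply, smul_smul, Algebra.commutes] }

def scalarHom [Algebra ℂ R] (c : ℂ) (X : TwoCx R) : X ⟶ X where
  f1 := scalarMod c X.X1
  f0 := scalarMod c X.X0
  comm1 := by
    apply ModuleCat.hom_ext
    refine LinearMap.ext fun x => ?_
    exact (map_smul X.d1.hom (algebraMap ℂ R c) x).symm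
  comm0 := by
    apply ModuleCat.hom_ext
    refine LinearMap.ext fun x => ?_
    exact (map_smul X.d0.hom (algebraMap ℂ R c) x).symm

end


noncomputable section ProofSection

open CategoryTheory

variable {R : Type u} [Ring R]

theorem mext {M N : ModuleCat.{u} R} {f g : M ⟶ N} (h : ∀ x, f x = g x) : f = g :=
  ModuleCat.hom_ext (LinearMap.ext h)

attribute [reducible] starCx

theorem mcongr {M N : ModuleCat.{u} R} {f g : M ⟶ N} (h : f = g) (x : M) : f x = g x := by
  rw [h]

-- ## A. Homotopy is a congruence
theorem htp_refl {X Y : TwoCx R} (f : X ⟶ Y) : Homotopic f f :=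
  ⟨0, 0, by simp, by simp⟩

theorem htp_symm {X Y : TwoCx R} {f g : X ⟶ Y} (h : Homotopic f g) : Homotopic g f := by
  obtain ⟨h1, h0, e1, e0⟩ := h
  refine ⟨-h1, -h0, ?_, ?_⟩
  · rw [← neg_sub (TwoHom.f1 f), e1, neg_add, Preadditive.neg_comp, Preadditive.comp_neg]
  · rw [← neg_sub (TwoHom.f0 f), e0, neg_add, Preadditive.neg_comp, Preadditive.comp_neg]

theorem htp_trans {X Y : TwoCx R} {f g k : X ⟶ Y} (h : Homotopic f g) (h' : Homotopic g k) :
    Homotopic f k := by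
  obtain ⟨h1, h0, e1, e0⟩ := h
  obtain ⟨h1', h0', e1', e0'⟩ := h'
  refine ⟨h1 + h1', h0 + h0', ?_, ?_⟩
  · have h2 : TwoHom.f1 f - TwoHom.f1 k
        = (TwoHom.f1 f - TwoHom.f1 g) + (TwoHom.f1 g - TwoHom.f1 k) := by abel
    rw [h2, e1, e1', Preadditive.add_comp, Preadditive.comp_add]
    abel
  · have h2 : TwoHom.f0 f - TwoHom.f0 k
        = (TwoHom.f0 f - TwoHom.f0 g) + (TwoHom.f0 g - TwoHom.f0 k) := by abel
    rw [h2, e0, e0', Preadditive.add_comp, Preadditive.comp_add]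
    abel

theorem htp_compLeft {X Y Z : TwoCx R} (f : X ⟶ Y) {g g' : Y ⟶ Z} (h : Homotopic g g') :
    Homotopic (f ≫ g) (f ≫ g') := by
  obtain ⟨h1, h0, e1, e0⟩ := h
  refine ⟨f.f1 ≫ h1, f.f0 ≫ h0, mext fun x => ?_, mext fun x => ?_⟩
  · have hc : TwoHom.f0 f (X.d1 x) = Y.d1 (TwoHom.f1 f x) := mcongr f.comm1 x
    have he : TwoHom.f1 g (TwoHom.f1 f x) - TwoHom.f1 g' (TwoHom.f1 f x)
        = Z.d0 (h1 (TwoHom.f1 f x)) + h0 (Y.d1 (TwoHom.f1 f x)) :=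
      mcongr e1 (TwoHom.f1 f x)
    show TwoHom.f1 g (TwoHom.f1 f x) - TwoHom.f1 g' (TwoHom.f1 f x)
        = Z.d0 (h1 (TwoHom.f1 f x)) + h0 (TwoHom.f0 f (X.d1 x))
    rw [hc]; exact he
  · have hc : TwoHom.f1 f (X.d0 x) = Y.d0 (TwoHom.f0 f x) := mcongr f.comm0 x
    have he : TwoHom.f0 g (TwoHom.f0 f x) - TwoHom.f0 g' (TwoHom.f0 f x)
        = Z.d1 (h0 (TwoHom.f0 f x)) + h1 (Y.d0 (TwoHom.f0 f x)) :=
      mcongr e0 (TwoHom.f0 f x)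
    show TwoHom.f0 g (TwoHom.f0 f x) - TwoHom.f0 g' (TwoHom.f0 f x)
        = Z.d1 (h0 (TwoHom.f0 f x)) + h1 (TwoHom.f1 f (X.d0 x))
    rw [hc]; exact he

theorem htp_compRight {X Y Z : TwoCx R} {f f' : X ⟶ Y} (g : Y ⟶ Z) (h : Homotopic f f') :
    Homotopic (f ≫ g) (f' ≫ g) := by
  obtain ⟨h1, h0, e1, e0⟩ := h
  refine ⟨h1 ≫ g.f0, h0 ≫ g.f1, mext fun x => ?_, mext fun x => ?_⟩
  · have hc : TwoHom.f1 g (Y.d0 (h1 x)) = Z.d0 (TwoHom.f0 g (h1 x)) :=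
      mcongr g.comm0 (h1 x)
    have he : TwoHom.f1 f x - TwoHom.f1 f' x = Y.d0 (h1 x) + h0 (X.d1 x) :=
      mcongr e1 x
    show TwoHom.f1 g (TwoHom.f1 f x) - TwoHom.f1 g (TwoHom.f1 f' x)
        = Z.d0 (TwoHom.f0 g (h1 x)) + TwoHom.f1 g (h0 (X.d1 x))
    rw [← hc, ← map_add, ← he, map_sub]
  · have hc : TwoHom.f0 g (Y.d1 (h0 x)) = Z.d1 (TwoHom.f1 g (h0 x)) :=
      mcongr g.comm1 (h0 x)
    have he : TwoHom.f0 f x - TwoHom.f0 f' x = Y.d1 (h0 x) + h1 (X.d0 x) :=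
      mcongr e0 x
    show TwoHom.f0 g (TwoHom.f0 f x) - TwoHom.f0 g (TwoHom.f0 f' x)
        = Z.d1 (TwoHom.f1 g (h0 x)) + TwoHom.f0 g (h1 (X.d0 x))
    rw [← hc, ← map_add, ← he, map_sub]

instance : Congruence (htpRel R) where
  equivalence := ⟨htp_refl, htp_symm, htp_trans⟩
  comp_left := htp_compLeft
  comp_right := fun g h => htp_compRight g h

-- ## B. Radical lemmas
theorem modRad_map {M N : ModuleCat.{u} R} (f : M →ₗ[R] N) {x : M}
    (hx : x ∈ modRad M) : f x ∈ modRad N := by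
  refine Submodule.mem_sInf.2 fun N' hN' => ?_
  rcases eq_or_ne (Submodule.comap f N') ⊤ with h | h
  · exact Submodule.eq_top_iff'.1 h x
  · have hco : IsCoatom (Submodule.comap f N') := by
      refine ⟨h, fun J hJ => ?_⟩
      obtain ⟨y, hyJ, hy⟩ := SetLike.exists_of_lt hJ
      have hfy : f y ∉ N' := hy
      have htop : N' ⊔ Submodule.span R {f y} = ⊤ := by
        refine hN'.2 _ (lt_of_le_of_ne le_sup_left fun hEq => hfy ?_)
        rw [hEq]
        exact Submodule.mem_sup_right (Submodule.mem_span_singleton_self _)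
      rw [eq_top_iff]
      intro m _
      have hm : f m ∈ N' ⊔ Submodule.span R {f y} := htop ▸ Submodule.mem_top
      obtain ⟨n, hn, z, hz, hmz⟩ := Submodule.mem_sup.1 hm
      obtain ⟨c, rfl⟩ := Submodule.mem_span_singleton.1 hz
      have hsub : m - c • y ∈ Submodule.comap f N' := by
        have : f (m - c • y) = n := by
          rw [map_sub, map_smul, ← hmz]; abel
        simpa [Submodule.mem_comap, this] using hn
      have : m = (m - c • y) + c • y := by abel
      rw [this]
      exact add_mem (hJ.le hsub) (Submodule.smul_mem _ _ hyJ)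
    have hle : modRad M ≤ Submodule.comap f N' := sInf_le hco
    exact hle hx

theorem surj_of_modRad {M : ModuleCat.{u} R} [Module.Finite R M]
    (u : M →ₗ[R] M) (h : ∀ x, u x - x ∈ modRad M) : Function.Surjective u := by
  have hco : IsCoatomic (Submodule R M) :=
    CompleteLattice.coatomic_of_top_compact ((Submodule.fg_iff_compact _).1 Module.Finite.fg_top)
  by_contra hs
  have hr : LinearMap.range u ≠ ⊤ := fun ht => hs (LinearMap.range_eq_top.1 ht)
  rcases (hco.eq_top_or_exists_le_coatom (LinearMap.range u)).resolve_left hr with ⟨N, hN, hle⟩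
  have hall : ∀ x : M, x ∈ N := by
    intro x
    have h1 : u x ∈ N := hle ⟨x, rfl⟩
    have h2 : u x - x ∈ N := (sInf_le hN : modRad M ≤ N) (h x)
    have := sub_mem h1 h2
    simpa using this
  exact hN.1 (eq_top_iff.2 fun x _ => hall x)

theorem bij_of_modRad {M : ModuleCat.{u} R} [Module.Finite R M] [IsNoetherian R M]
    (u : M →ₗ[R] M) (h : ∀ x, u x - x ∈ modRad M) : Function.Bijective u :=
  IsNoetherian.bijective_of_surjective_endomorphism u (surj_of_modRad u h)

-- ## C. Isomorphisms from bijective components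
def isoOfBij {X Y : TwoCx R} (f : X ⟶ Y) (hb1 : Function.Bijective f.f1)
    (hb0 : Function.Bijective f.f0) : X ≅ Y where
  hom := f
  inv :=
    { f1 := ModuleCat.ofHom (LinearEquiv.ofBijective f.f1.hom hb1).symm.toLinearMap
      f0 := ModuleCat.ofHom (LinearEquiv.ofBijective f.f0.hom hb0).symm.toLinearMap
      comm1 := by
        refine mext fun y => ?_
        obtain ⟨x, rfl⟩ := hb1.2 y
        have hc : TwoHom.f0 f (X.d1 x) = Y.d1 (TwoHom.f1 f x) := mcongr f.comm1 x
        show (LinearEquiv.ofBijective f.f0.hom hb0).symm (Y.d1 (TwoHom.f1 f x))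
            = X.d1 ((LinearEquiv.ofBijective f.f1.hom hb1).symm (TwoHom.f1 f x))
        rw [← hc]
        have h1 : (LinearEquiv.ofBijective f.f0.hom hb0).symm (TwoHom.f0 f (X.d1 x)) = X.d1 x :=
          (LinearEquiv.ofBijective f.f0.hom hb0).symm_apply_apply (X.d1 x)
        have h2 : (LinearEquiv.ofBijective f.f1.hom hb1).symm (TwoHom.f1 f x) = x :=
          (LinearEquiv.ofBijective f.f1.hom hb1).symm_apply_apply x
        rw [h1, h2]
      comm0 := by
        refine mext fun y => ?_
        obtain ⟨x, rfl⟩ := hb0.2 y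
        have hc : TwoHom.f1 f (X.d0 x) = Y.d0 (TwoHom.f0 f x) := mcongr f.comm0 x
        show (LinearEquiv.ofBijective f.f1.hom hb1).symm (Y.d0 (TwoHom.f0 f x))
            = X.d0 ((LinearEquiv.ofBijective f.f0.hom hb0).symm (TwoHom.f0 f x))
        rw [← hc]
        have h1 : (LinearEquiv.ofBijective f.f1.hom hb1).symm (TwoHom.f1 f (X.d0 x)) = X.d0 x :=
          (LinearEquiv.ofBijective f.f1.hom hb1).symm_apply_apply (X.d0 x)
        have h2 : (LinearEquiv.ofBijective f.f0.hom hb0).symm (TwoHom.f0 f x) = x :=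
          (LinearEquiv.ofBijective f.f0.hom hb0).symm_apply_apply x
        rw [h1, h2] }
  hom_inv_id := by
    refine hom_ext (mext fun x => ?_) (mext fun x => ?_)
    · exact (LinearEquiv.ofBijective f.f1.hom hb1).symm_apply_apply x
    · exact (LinearEquiv.ofBijective f.f0.hom hb0).symm_apply_apply x
  inv_hom_id := by
    refine hom_ext (mext fun x => ?_) (mext fun x => ?_)
    · exact (LinearEquiv.ofBijective f.f1.hom hb1).apply_symm_apply x
    · exact (LinearEquiv.ofBijective f.f0.hom hb0).apply_symm_apply x

-- ## D. The canonical map `X ⟶ (X^*)^*` and cones of endomorphisms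
def toDD {X : TwoCx R} (f : X ⟶ X) : X ⟶ starCx (starCx X) where
  f1 := f.f1
  f0 := f.f0
  comm1 := by
    show X.d1 ≫ f.f0 = f.f1 ≫ (starCx (starCx X)).d1
    have h : (starCx (starCx X)).d1 = X.d1 := by
      show - - X.d1 = X.d1
      simp
    rw [h]
    exact f.comm1
  comm0 := by
    show X.d0 ≫ f.f1 = f.f0 ≫ (starCx (starCx X)).d0
    have h : (starCx (starCx X)).d0 = X.d0 := by
      show - - X.d0 = X.d0
      simp
    rw [h]
    exact f.comm0

@[simp] theorem toDD_f1 {X : TwoCx R} (f : X ⟶ X) : (toDD f).f1 = f.f1 := rfl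
@[simp] theorem toDD_f0 {X : TwoCx R} (f : X ⟶ X) : (toDD f).f0 = f.f0 := rfl

theorem coneE_d1_apply {X : TwoCx R} (f : X ⟶ X) (p : X.X1 × X.X0) :
    (coneCx (toDD f)).d1 p = (X.d1 p.1, -(X.d0 p.2) - f.f1 p.1) := rfl

theorem coneE_d0_apply {X : TwoCx R} (f : X ⟶ X) (p : X.X0 × X.X1) :
    (coneCx (toDD f)).d0 p = (X.d0 p.1, -(X.d1 p.2) - f.f0 p.1) := rfl

-- ## E. A standard contractible complex
def Dc (X : TwoCx R) : TwoCx R where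
  X1 := ModuleCat.of R (X.X1 × X.X0)
  X0 := ModuleCat.of R (X.X1 × X.X0)
  fin1 := by
    haveI := X.fin1; haveI := X.fin0
    exact (inferInstance : Module.Finite R (X.X1 × X.X0))
  proj1 := by
    haveI := X.proj1; haveI := X.proj0
    exact (inferInstance : Module.Projective R (X.X1 × X.X0))
  fin0 := by
    haveI := X.fin1; haveI := X.fin0
    exact (inferInstance : Module.Finite R (X.X1 × X.X0))
  proj0 := by
    haveI := X.proj1; haveI := X.proj0
    exact (inferInstance : Module.Projective R (X.X1 × X.X0))
  d1 := ModuleCat.ofHom <| LinearMap.prodMap (LinearMap.id : X.X1 →ₗ[R] X.X1) (0 : X.X0 →ₗ[R] X.X0)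
  d0 := ModuleCat.ofHom <| LinearMap.prodMap (0 : X.X1 →ₗ[R] X.X1) (LinearMap.id : X.X0 →ₗ[R] X.X0)
  dd1 := by
    refine mext fun p => Prod.ext ?_ ?_
    · show (0 : X.X1 →ₗ[R] X.X1) p.1 = 0
      rfl
    · show (LinearMap.id : X.X0 →ₗ[R] X.X0) ((0 : X.X0 →ₗ[R] X.X0) p.2) = 0
      rfl
  dd0 := by
    refine mext fun p => Prod.ext ?_ ?_
    · show (LinearMap.id : X.X1 →ₗ[R] X.X1) ((0 : X.X1 →ₗ[R] X.X1) p.1) = 0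
      rfl
    · show (0 : X.X0 →ₗ[R] X.X0) p.2 = 0
      rfl

theorem Dc_d1_apply (X : TwoCx R) (p : X.X1 × X.X0) : (Dc X).d1 p = (p.1, 0) := rfl
theorem Dc_d0_apply (X : TwoCx R) (p : X.X1 × X.X0) : (Dc X).d0 p = (0, p.2) := rfl

/-- `Dc X` is the same complex as `K_{X¹} ⊕ K^*_{X⁰}`. -/
def DcIso (X : TwoCx R) : Dc X ≅ dsum (kP X.X1 X.fin1 X.proj1) (kS X.X0 X.fin0 X.proj0) where
  hom :=
    { f1 := ModuleCat.ofHom LinearMap.id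
      f0 := ModuleCat.ofHom LinearMap.id
      comm1 := mext fun p => rfl
      comm0 := mext fun p => rfl }
  inv :=
    { f1 := ModuleCat.ofHom LinearMap.id
      f0 := ModuleCat.ofHom LinearMap.id
      comm1 := mext fun p => rfl
      comm0 := mext fun p => rfl }
  hom_inv_id := hom_ext (mext fun p => rfl) (mext fun p => rfl)
  inv_hom_id := hom_ext (mext fun p => rfl) (mext fun p => rfl)

/-- The chain map from the standard contractible complex to the cone of `f : X ⟶ X`. -/
def stdToCone {X : TwoCx R} (f : X ⟶ X) : Dc X ⟶ coneCx (toDD f) where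
  f1 := ModuleCat.ofHom <| LinearMap.prod
    (LinearMap.fst R X.X1 X.X0 + X.d0.hom ∘ₗ LinearMap.snd R X.X1 X.X0)
    (-(f.f0.hom ∘ₗ LinearMap.snd R X.X1 X.X0))
  f0 := ModuleCat.ofHom <| LinearMap.prod
    (X.d1.hom ∘ₗ LinearMap.fst R X.X1 X.X0 + LinearMap.snd R X.X1 X.X0)
    (-(f.f1.hom ∘ₗ LinearMap.fst R X.X1 X.X0))
  comm1 := by
    refine mext fun p => ?_
    have hdd : X.d1 (X.d0 p.2) = 0 := mcongr X.dd0 p.2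
    have hc : f.f1 (X.d0 p.2) = X.d0 (f.f0 p.2) := mcongr f.comm0 p.2
    refine Prod.ext ?_ ?_
    · show X.d1 p.1 + (0 : X.X0) = X.d1 (p.1 + X.d0 p.2)
      rw [map_add, hdd]
    · show -(f.f1 p.1) = -(X.d0 (-(f.f0 p.2))) - f.f1 (p.1 + X.d0 p.2)
      rw [map_neg, map_add, hc]
      abel
  comm0 := by
    refine mext fun p => ?_
    have hdd : X.d0 (X.d1 p.1) = 0 := mcongr X.dd1 p.1
    have hc : f.f0 (X.d1 p.1) = X.d1 (f.f1 p.1) := mcongr f.comm1 p.1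
    refine Prod.ext ?_ ?_
    · show (0 : X.X1) + X.d0 p.2 = X.d0 (X.d1 p.1 + p.2)
      rw [map_add, hdd]
    · show -(f.f0 p.2) = -(X.d1 (-(f.f1 p.1))) - f.f0 (X.d1 p.1 + p.2)
      rw [map_neg, map_add, hc]
      abel

theorem stdToCone_bij1 {X : TwoCx R} (f : X ⟶ X) (hb0 : Function.Bijective f.f0) :
    Function.Bijective (stdToCone f).f1 := by
  constructor
  · intro p q hpq
    have h2 : -(f.f0 p.2) = -(f.f0 q.2) := congrArg Prod.snd hpq
    have hp2 : p.2 = q.2 := hb0.1 (by simpa using h2)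
    have h1 : p.1 + X.d0 p.2 = q.1 + X.d0 q.2 := congrArg Prod.fst hpq
    rw [hp2] at h1
    exact Prod.ext (add_right_cancel h1) hp2
  · rintro ⟨c, e⟩
    obtain ⟨b, hb⟩ := hb0.2 (-e)
    refine ⟨(c - X.d0 b, b), ?_⟩
    show ((c - X.d0 b + X.d0 b, -(f.f0 b)) : X.X1 × X.X0) = (c, e)
    rw [hb]
    exact Prod.ext (by module) (neg_neg _)

theorem stdToCone_bij0 {X : TwoCx R} (f : X ⟶ X) (hb1 : Function.Bijective f.f1) :
    Function.Bijective (stdToCone f).f0 := by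
  constructor
  · intro p q hpq
    have h2 : -(f.f1 p.1) = -(f.f1 q.1) := congrArg Prod.snd hpq
    have hp1 : p.1 = q.1 := hb1.1 (by simpa using h2)
    have h1 : X.d1 p.1 + p.2 = X.d1 q.1 + q.2 := congrArg Prod.fst hpq
    rw [hp1] at h1
    exact Prod.ext hp1 (add_left_cancel h1)
  · rintro ⟨c, e⟩
    obtain ⟨a, ha⟩ := hb1.2 (-e)
    refine ⟨(a, c - X.d1 a), ?_⟩
    show ((X.d1 a + (c - X.d1 a), -(f.f1 a)) : X.X0 × X.X1) = (c, e)
    rw [ha]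
    exact Prod.ext (by module) (neg_neg _)

/-- The cone of a `C₂`-isomorphism is isomorphic to the standard contractible complex. -/
def stdConeIso {X : TwoCx R} (f : X ⟶ X) (hb1 : Function.Bijective f.f1)
    (hb0 : Function.Bijective f.f0) : Dc X ≅ coneCx (toDD f) :=
  isoOfBij (stdToCone f) (stdToCone_bij1 f hb0) (stdToCone_bij0 f hb1)

-- ## F. Contractibility
theorem contr_Dc (X : TwoCx R) : Contractible (Dc X) := by
  refine ⟨ModuleCat.ofHom (LinearMap.prodMap 0 LinearMap.id), ModuleCat.ofHom (LinearMap.prodMap LinearMap.id 0),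
    mext fun p => ?_, mext fun p => ?_⟩
  · show p - 0 = (((0 : X.X1), p.2) : X.X1 × X.X0) + ((p.1, (0 : X.X0)) : X.X1 × X.X0)
    refine Prod.ext ?_ ?_
    · show p.1 - 0 = 0 + p.1
      abel
    · show p.2 - 0 = p.2 + 0
      abel
  · show p - 0 = ((p.1, (0 : X.X0)) : X.X1 × X.X0) + (((0 : X.X1), p.2) : X.X1 × X.X0)
    refine Prod.ext ?_ ?_
    · show p.1 - 0 = p.1 + 0
      abel
    · show p.2 - 0 = 0 + p.2
      abel

theorem contr_of_iso {X Y : TwoCx R} (e : X ≅ Y) (h : Contractible X) : Contractible Y := by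
  obtain ⟨h1, h0, e1, e0⟩ := h
  refine ⟨e.inv.f1 ≫ h1 ≫ e.hom.f0, e.inv.f0 ≫ h0 ≫ e.hom.f1,
    mext fun y => ?_, mext fun y => ?_⟩
  · have hy : e.hom.f1 (e.inv.f1 y) = y :=
      mcongr (congrArg TwoHom.f1 e.inv_hom_id) y
    have hc0 : e.hom.f1 (X.d0 (h1 (e.inv.f1 y))) = Y.d0 (e.hom.f0 (h1 (e.inv.f1 y))) :=
      mcongr e.hom.comm0 (h1 (e.inv.f1 y))
    have hc1 : e.inv.f0 (Y.d1 y) = X.d1 (e.inv.f1 y) :=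
      mcongr e.inv.comm1 y
    have hE : e.inv.f1 y - 0 = X.d0 (h1 (e.inv.f1 y)) + h0 (X.d1 (e.inv.f1 y)) :=
      mcongr e1 (e.inv.f1 y)
    rw [sub_zero] at hE
    show y - 0 = Y.d0 (e.hom.f0 (h1 (e.inv.f1 y))) + e.hom.f1 (h0 (e.inv.f0 (Y.d1 y)))
    rw [← hc0, hc1, ← map_add, ← hE, hy, sub_zero]
  · have hy : e.hom.f0 (e.inv.f0 y) = y :=
      mcongr (congrArg TwoHom.f0 e.inv_hom_id) y
    have hc1 : e.hom.f0 (X.d1 (h0 (e.inv.f0 y))) = Y.d1 (e.hom.f1 (h0 (e.inv.f0 y))) :=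
      mcongr e.hom.comm1 (h0 (e.inv.f0 y))
    have hc0 : e.inv.f1 (Y.d0 y) = X.d0 (e.inv.f0 y) :=
      mcongr e.inv.comm0 y
    have hE : e.inv.f0 y - 0 = X.d1 (h0 (e.inv.f0 y)) + h1 (X.d0 (e.inv.f0 y)) :=
      mcongr e0 (e.inv.f0 y)
    rw [sub_zero] at hE
    show y - 0 = Y.d1 (e.hom.f1 (h0 (e.inv.f0 y))) + e.hom.f0 (h1 (e.inv.f1 (Y.d0 y)))
    rw [← hc1, hc0, ← map_add, ← hE, hy, sub_zero]
-- ## G. Radical complexes: contractible cone forces bijective components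
theorem bij_of_htp {X : TwoCx R} (hX : RadicalCx X)
    [Module.Finite R X.X1] [Module.Finite R X.X0]
    [IsNoetherian R X.X1] [IsNoetherian R X.X0]
    {f g : X ⟶ X} (hfg : Homotopic (f ≫ g) (𝟙 X)) (hgf : Homotopic (g ≫ f) (𝟙 X)) :
    Function.Bijective f.f1 ∧ Function.Bijective f.f0 := by
  obtain ⟨k1, k0, e1, e0⟩ := hfg
  obtain ⟨l1, l0, t1, t0⟩ := hgf
  have hu1 : Function.Bijective (g.f1.hom ∘ₗ f.f1.hom : X.X1 →ₗ[R] X.X1) := by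
    refine bij_of_modRad _ fun x => ?_
    have he : TwoHom.f1 g (TwoHom.f1 f x) - x = X.d0 (k1 x) + k0 (X.d1 x) := by
      simpa using mcongr e1 x
    show TwoHom.f1 g (TwoHom.f1 f x) - x ∈ modRad X.X1
    rw [he]
    exact add_mem (hX.2 ⟨_, rfl⟩) (modRad_map k0.hom (hX.1 ⟨x, rfl⟩))
  have hu2 : Function.Bijective (f.f1.hom ∘ₗ g.f1.hom : X.X1 →ₗ[R] X.X1) := by
    refine bij_of_modRad _ fun x => ?_
    have he : TwoHom.f1 f (TwoHom.f1 g x) - x = X.d0 (l1 x) + l0 (X.d1 x) := by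
      simpa using mcongr t1 x
    show TwoHom.f1 f (TwoHom.f1 g x) - x ∈ modRad X.X1
    rw [he]
    exact add_mem (hX.2 ⟨_, rfl⟩) (modRad_map l0.hom (hX.1 ⟨x, rfl⟩))
  have hv1 : Function.Bijective (g.f0.hom ∘ₗ f.f0.hom : X.X0 →ₗ[R] X.X0) := by
    refine bij_of_modRad _ fun x => ?_
    have he : TwoHom.f0 g (TwoHom.f0 f x) - x = X.d1 (k0 x) + k1 (X.d0 x) := by
      simpa using mcongr e0 x
    show TwoHom.f0 g (TwoHom.f0 f x) - x ∈ modRad X.X0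
    rw [he]
    exact add_mem (hX.1 ⟨_, rfl⟩) (modRad_map k1.hom (hX.2 ⟨x, rfl⟩))
  have hv2 : Function.Bijective (f.f0.hom ∘ₗ g.f0.hom : X.X0 →ₗ[R] X.X0) := by
    refine bij_of_modRad _ fun x => ?_
    have he : TwoHom.f0 f (TwoHom.f0 g x) - x = X.d1 (l0 x) + l1 (X.d0 x) := by
      simpa using mcongr t0 x
    show TwoHom.f0 f (TwoHom.f0 g x) - x ∈ modRad X.X0
    rw [he]
    exact add_mem (hX.1 ⟨_, rfl⟩) (modRad_map l1.hom (hX.2 ⟨x, rfl⟩))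
  constructor
  · constructor
    · have := hu1.injective
      rw [LinearMap.coe_comp] at this
      exact Function.Injective.of_comp this
    · have := hu2.surjective
      rw [LinearMap.coe_comp] at this
      exact Function.Surjective.of_comp this
  · constructor
    · have := hv1.injective
      rw [LinearMap.coe_comp] at this
      exact Function.Injective.of_comp this
    · have := hv2.surjective
      rw [LinearMap.coe_comp] at this
      exact Function.Surjective.of_comp this

theorem bij_of_cone_contr {X : TwoCx R} (hX : RadicalCx X)
    [Module.Finite R X.X1] [Module.Finite R X.X0]
    [IsNoetherian R X.X1] [IsNoetherian R X.X0]
    (g : X ⟶ X) (hc : Contractible (coneCx (toDD g))) :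
    Function.Bijective g.f1 ∧ Function.Bijective g.f0 := by
  obtain ⟨k1, k0, e1, e0⟩ := hc
  set J1 : (X.X1 × X.X0) →ₗ[R] X.X0 × X.X1 := k1.hom with hJ1
  set J0 : (X.X0 × X.X1) →ₗ[R] X.X1 × X.X0 := k0.hom with hJ0
  have E1a : ∀ z : X.X1 × X.X0, z.1 = X.d0 ((J1 z).1)
      + (J0 ((X.d1 z.1, -(X.d0 z.2) - TwoHom.f1 g z.1) : X.X0 × X.X1)).1 := by
    intro z
    have h := mcongr e1 z
    have ha : z.1 - 0 = X.d0 ((J1 z).1)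
        + (J0 ((X.d1 z.1, -(X.d0 z.2) - TwoHom.f1 g z.1) : X.X0 × X.X1)).1 :=
      congrArg Prod.fst h
    rw [sub_zero] at ha
    exact ha
  have E1b : ∀ z : X.X1 × X.X0, z.2 = (-(X.d1 ((J1 z).2)) - TwoHom.f0 g ((J1 z).1))
      + (J0 ((X.d1 z.1, -(X.d0 z.2) - TwoHom.f1 g z.1) : X.X0 × X.X1)).2 := by
    intro z
    have h := mcongr e1 z
    have ha : z.2 - 0 = (-(X.d1 ((J1 z).2)) - TwoHom.f0 g ((J1 z).1))
        + (J0 ((X.d1 z.1, -(X.d0 z.2) - TwoHom.f1 g z.1) : X.X0 × X.X1)).2 :=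
      congrArg Prod.snd h
    rw [sub_zero] at ha
    exact ha
  have E0a : ∀ z : X.X0 × X.X1, z.1 = X.d1 ((J0 z).1)
      + (J1 ((X.d0 z.1, -(X.d1 z.2) - TwoHom.f0 g z.1) : X.X1 × X.X0)).1 := by
    intro z
    have h := mcongr e0 z
    have ha : z.1 - 0 = X.d1 ((J0 z).1)
        + (J1 ((X.d0 z.1, -(X.d1 z.2) - TwoHom.f0 g z.1) : X.X1 × X.X0)).1 :=
      congrArg Prod.fst h
    rw [sub_zero] at ha
    exact ha
  have E0b : ∀ z : X.X0 × X.X1, z.2 = (-(X.d0 ((J0 z).2)) - TwoHom.f1 g ((J0 z).1))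
      + (J1 ((X.d0 z.1, -(X.d1 z.2) - TwoHom.f0 g z.1) : X.X1 × X.X0)).2 := by
    intro z
    have h := mcongr e0 z
    have ha : z.2 - 0 = (-(X.d0 ((J0 z).2)) - TwoHom.f1 g ((J0 z).1))
        + (J1 ((X.d0 z.1, -(X.d1 z.2) - TwoHom.f0 g z.1) : X.X1 × X.X0)).2 :=
      congrArg Prod.snd h
    rw [sub_zero] at ha
    exact ha
  set w : X.X1 →ₗ[R] X.X1 :=
    -(LinearMap.fst R X.X1 X.X0 ∘ₗ J0 ∘ₗ LinearMap.inr R X.X0 X.X1) with hwdef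
  set w' : X.X0 →ₗ[R] X.X0 :=
    -(LinearMap.fst R X.X0 X.X1 ∘ₗ J1 ∘ₗ LinearMap.inr R X.X1 X.X0) with hw'def
  have hwapp : ∀ y : X.X1, w y = -((J0 ((0, y) : X.X0 × X.X1)).1) := fun y => rfl
  have hw'app : ∀ y : X.X0, w' y = -((J1 ((0, y) : X.X1 × X.X0)).1) := fun y => rfl
  have hneg0 : ∀ y : X.X1, J0 ((0, -y) : X.X0 × X.X1) = -(J0 ((0, y) : X.X0 × X.X1)) := by
    intro y
    have hp : ((0, -y) : X.X0 × X.X1) = -((0, y) : X.X0 × X.X1) := by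
      refine Prod.ext ?_ ?_ <;> simp
    rw [hp, map_neg]
  have hneg1 : ∀ y : X.X0, J1 ((0, -y) : X.X1 × X.X0) = -(J1 ((0, y) : X.X1 × X.X0)) := by
    intro y
    have hp : ((0, -y) : X.X1 × X.X0) = -((0, y) : X.X1 × X.X0) := by
      refine Prod.ext ?_ ?_ <;> simp
    rw [hp, map_neg]
  -- injectivity of g.f1
  have hinj1 : Function.Injective g.f1 := by
    have hbij : Function.Bijective (w ∘ₗ g.f1.hom : X.X1 →ₗ[R] X.X1) := by
      refine bij_of_modRad _ fun x => ?_
      have hE := E1a ((x, 0) : X.X1 × X.X0)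
      have harg : ((X.d1 x, -(X.d0 (0 : X.X0)) - TwoHom.f1 g x) : X.X0 × X.X1)
          = ((X.d1 x, 0) : X.X0 × X.X1) + ((0, -(TwoHom.f1 g x)) : X.X0 × X.X1) := by
        refine Prod.ext ?_ ?_ <;> simp
      rw [harg, map_add, hneg0] at hE
      have hE' : x = X.d0 ((J1 ((x, 0) : X.X1 × X.X0)).1)
          + ((J0 ((X.d1 x, 0) : X.X0 × X.X1)).1
            + -((J0 ((0, TwoHom.f1 g x) : X.X0 × X.X1)).1)) := hE
      have hC : (w ∘ₗ g.f1.hom : X.X1 →ₗ[R] X.X1) x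
          = -((J0 ((0, TwoHom.f1 g x) : X.X0 × X.X1)).1) :=
        hwapp (TwoHom.f1 g x)
      set A := X.d0 ((J1 ((x, 0) : X.X1 × X.X0)).1) with hA
      set B := (J0 ((X.d1 x, 0) : X.X0 × X.X1)).1 with hB
      set C := (J0 ((0, TwoHom.f1 g x) : X.X0 × X.X1)).1 with hCC
      have harith : (w ∘ₗ g.f1.hom : X.X1 →ₗ[R] X.X1) x - x = -A - B := by
        rw [hC, hE']
        abel
      rw [harith]
      refine sub_mem (neg_mem (hX.2 ⟨_, rfl⟩)) ?_
      exact modRad_map (LinearMap.fst R X.X1 X.X0 ∘ₗ J0 ∘ₗ LinearMap.inl R X.X0 X.X1)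
        (hX.1 ⟨x, rfl⟩)
    have hco := hbij.injective
    rw [LinearMap.coe_comp] at hco
    exact Function.Injective.of_comp hco
  -- surjectivity of g.f1
  have hsurj1 : Function.Surjective g.f1 := by
    have hbij : Function.Bijective (g.f1.hom ∘ₗ w : X.X1 →ₗ[R] X.X1) := by
      refine bij_of_modRad _ fun y => ?_
      have hE := E0b ((0, y) : X.X0 × X.X1)
      have harg : ((X.d0 (0 : X.X0), -(X.d1 y) - TwoHom.f0 g (0 : X.X0)) : X.X1 × X.X0)
          = ((0, -(X.d1 y)) : X.X1 × X.X0) := by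
        refine Prod.ext ?_ ?_ <;> simp
      rw [harg] at hE
      have hE' : y = (-(X.d0 ((J0 ((0, y) : X.X0 × X.X1)).2))
            - TwoHom.f1 g ((J0 ((0, y) : X.X0 × X.X1)).1))
          + (J1 ((0, -(X.d1 y)) : X.X1 × X.X0)).2 := hE
      have hC : (g.f1.hom ∘ₗ w : X.X1 →ₗ[R] X.X1) y
          = -(TwoHom.f1 g ((J0 ((0, y) : X.X0 × X.X1)).1)) := by
        show TwoHom.f1 g (w y) = _
        rw [hwapp, map_neg]
      set A := X.d0 ((J0 ((0, y) : X.X0 × X.X1)).2) with hA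
      set B := (J1 ((0, -(X.d1 y)) : X.X1 × X.X0)).2 with hB
      set C := TwoHom.f1 g ((J0 ((0, y) : X.X0 × X.X1)).1) with hCC
      have harith : (g.f1.hom ∘ₗ w : X.X1 →ₗ[R] X.X1) y - y = A - B := by
        rw [hC, hE']
        abel
      rw [harith]
      refine sub_mem (hX.2 ⟨_, rfl⟩) ?_
      exact modRad_map (LinearMap.snd R X.X0 X.X1 ∘ₗ J1 ∘ₗ LinearMap.inr R X.X1 X.X0)
        (neg_mem (hX.1 ⟨y, rfl⟩))
    have hco := hbij.surjective
    rw [LinearMap.coe_comp] at hco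
    exact Function.Surjective.of_comp hco
  -- injectivity of g.f0
  have hinj0 : Function.Injective g.f0 := by
    have hbij : Function.Bijective (w' ∘ₗ g.f0.hom : X.X0 →ₗ[R] X.X0) := by
      refine bij_of_modRad _ fun x => ?_
      have hE := E0a ((x, 0) : X.X0 × X.X1)
      have harg : ((X.d0 x, -(X.d1 (0 : X.X1)) - TwoHom.f0 g x) : X.X1 × X.X0)
          = ((X.d0 x, 0) : X.X1 × X.X0) + ((0, -(TwoHom.f0 g x)) : X.X1 × X.X0) := by
        refine Prod.ext ?_ ?_ <;> simp
      rw [harg, map_add, hneg1] at hE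
      have hE' : x = X.d1 ((J0 ((x, 0) : X.X0 × X.X1)).1)
          + ((J1 ((X.d0 x, 0) : X.X1 × X.X0)).1
            + -((J1 ((0, TwoHom.f0 g x) : X.X1 × X.X0)).1)) := hE
      have hC : (w' ∘ₗ g.f0.hom : X.X0 →ₗ[R] X.X0) x
          = -((J1 ((0, TwoHom.f0 g x) : X.X1 × X.X0)).1) :=
        hw'app (TwoHom.f0 g x)
      set A := X.d1 ((J0 ((x, 0) : X.X0 × X.X1)).1) with hA
      set B := (J1 ((X.d0 x, 0) : X.X1 × X.X0)).1 with hB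
      set C := (J1 ((0, TwoHom.f0 g x) : X.X1 × X.X0)).1 with hCC
      have harith : (w' ∘ₗ g.f0.hom : X.X0 →ₗ[R] X.X0) x - x = -A - B := by
        rw [hC, hE']
        abel
      rw [harith]
      refine sub_mem (neg_mem (hX.1 ⟨_, rfl⟩)) ?_
      exact modRad_map (LinearMap.fst R X.X0 X.X1 ∘ₗ J1 ∘ₗ LinearMap.inl R X.X1 X.X0)
        (hX.2 ⟨x, rfl⟩)
    have hco := hbij.injective
    rw [LinearMap.coe_comp] at hco
    exact Function.Injective.of_comp hco
  -- surjectivity of g.f0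
  have hsurj0 : Function.Surjective g.f0 := by
    have hbij : Function.Bijective (g.f0.hom ∘ₗ w' : X.X0 →ₗ[R] X.X0) := by
      refine bij_of_modRad _ fun y => ?_
      have hE := E1b ((0, y) : X.X1 × X.X0)
      have harg : ((X.d1 (0 : X.X1), -(X.d0 y) - TwoHom.f1 g (0 : X.X1)) : X.X0 × X.X1)
          = ((0, -(X.d0 y)) : X.X0 × X.X1) := by
        refine Prod.ext ?_ ?_ <;> simp
      rw [harg] at hE
      have hE' : y = (-(X.d1 ((J1 ((0, y) : X.X1 × X.X0)).2))
            - TwoHom.f0 g ((J1 ((0, y) : X.X1 × X.X0)).1))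
          + (J0 ((0, -(X.d0 y)) : X.X0 × X.X1)).2 := hE
      have hC : (g.f0.hom ∘ₗ w' : X.X0 →ₗ[R] X.X0) y
          = -(TwoHom.f0 g ((J1 ((0, y) : X.X1 × X.X0)).1)) := by
        show TwoHom.f0 g (w' y) = _
        rw [hw'app, map_neg]
      set A := X.d1 ((J1 ((0, y) : X.X1 × X.X0)).2) with hA
      set B := (J0 ((0, -(X.d0 y)) : X.X0 × X.X1)).2 with hB
      set C := TwoHom.f0 g ((J1 ((0, y) : X.X1 × X.X0)).1) with hCC
      have harith : (g.f0.hom ∘ₗ w' : X.X0 →ₗ[R] X.X0) y - y = A - B := by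
        rw [hC, hE']
        abel
      rw [harith]
      refine sub_mem (hX.1 ⟨_, rfl⟩) ?_
      exact modRad_map (LinearMap.snd R X.X1 X.X0 ∘ₗ J0 ∘ₗ LinearMap.inr R X.X0 X.X1)
        (neg_mem (hX.2 ⟨y, rfl⟩))
    have hco := hbij.surjective
    rw [LinearMap.coe_comp] at hco
    exact Function.Surjective.of_comp hco
  exact ⟨⟨hinj1, hsurj1⟩, ⟨hinj0, hsurj0⟩⟩
-- ## H. The connecting endomorphism of a short exact sequence `0 → X^* → Z → X → 0`
section Conn

variable {X Z : TwoCx R} (ses : SESData (starCx X) Z X)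
  (σ1 : X.X1 →ₗ[R] Z.X1) (σ0 : X.X0 →ₗ[R] Z.X0)
  (hσ1 : ∀ x, TwoHom.f1 ses.b (σ1 x) = x) (hσ0 : ∀ x, TwoHom.f0 ses.b (σ0 x) = x)

include hσ1 hσ0 in
theorem conn_mem0 : ∀ x : X.X1,
    σ0 (X.d1 x) - Z.d1 (σ1 x) ∈ LinearMap.range (TwoHom.f0 ses.a).hom := by
  intro x
  rw [ses.exact0, LinearMap.mem_ker]
  have hbc : TwoHom.f0 ses.b (Z.d1 (σ1 x)) = X.d1 (TwoHom.f1 ses.b (σ1 x)) :=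
    mcongr ses.b.comm1 (σ1 x)
  rw [map_sub, hbc, hσ1, hσ0]
  exact sub_self _

include hσ1 hσ0 in
theorem conn_mem1 : ∀ x : X.X0,
    σ1 (X.d0 x) - Z.d0 (σ0 x) ∈ LinearMap.range (TwoHom.f1 ses.a).hom := by
  intro x
  rw [ses.exact1, LinearMap.mem_ker]
  have hbc : TwoHom.f1 ses.b (Z.d0 (σ0 x)) = X.d0 (TwoHom.f0 ses.b (σ0 x)) :=
    mcongr ses.b.comm0 (σ0 x)
  rw [map_sub, hbc, hσ0, hσ1]
  exact sub_self _

/-- Degree-one component of the connecting endomorphism. -/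
def connF1 : X.X1 →ₗ[R] X.X1 :=
  ((LinearEquiv.ofInjective (TwoHom.f0 ses.a).hom ses.inj0).symm.toLinearMap ∘ₗ
    LinearMap.codRestrict (LinearMap.range (TwoHom.f0 ses.a).hom)
      (σ0 ∘ₗ X.d1.hom - Z.d1.hom ∘ₗ σ1)
      (conn_mem0 ses σ1 σ0 hσ1 hσ0) : X.X1 →ₗ[R] X.X1)

/-- Degree-zero component of the connecting endomorphism. -/
def connF0 : X.X0 →ₗ[R] X.X0 :=
  ((LinearEquiv.ofInjective (TwoHom.f1 ses.a).hom ses.inj1).symm.toLinearMap ∘ₗ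
    LinearMap.codRestrict (LinearMap.range (TwoHom.f1 ses.a).hom)
      (σ1 ∘ₗ X.d0.hom - Z.d0.hom ∘ₗ σ0)
      (conn_mem1 ses σ1 σ0 hσ1 hσ0) : X.X0 →ₗ[R] X.X0)

theorem connF1_spec (x : X.X1) :
    TwoHom.f0 ses.a (connF1 ses σ1 σ0 hσ1 hσ0 x) = σ0 (X.d1 x) - Z.d1 (σ1 x) :=
  LinearEquiv.ofInjective_symm_apply (f := (TwoHom.f0 ses.a).hom) (h := ses.inj0)
    (LinearMap.codRestrict (LinearMap.range (TwoHom.f0 ses.a).hom)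
      (σ0 ∘ₗ X.d1.hom - Z.d1.hom ∘ₗ σ1)
      (conn_mem0 ses σ1 σ0 hσ1 hσ0) x)

theorem connF0_spec (x : X.X0) :
    TwoHom.f1 ses.a (connF0 ses σ1 σ0 hσ1 hσ0 x) = σ1 (X.d0 x) - Z.d0 (σ0 x) :=
  LinearEquiv.ofInjective_symm_apply (f := (TwoHom.f1 ses.a).hom) (h := ses.inj1)
    (LinearMap.codRestrict (LinearMap.range (TwoHom.f1 ses.a).hom)
      (σ1 ∘ₗ X.d0.hom - Z.d0.hom ∘ₗ σ0)
      (conn_mem1 ses σ1 σ0 hσ1 hσ0) x)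

/-- The connecting endomorphism of `X` associated to a short exact sequence and a splitting. -/
def conn : X ⟶ X where
  f1 := ModuleCat.ofHom <| connF1 ses σ1 σ0 hσ1 hσ0
  f0 := ModuleCat.ofHom <| connF0 ses σ1 σ0 hσ1 hσ0
  comm1 := by
    refine mext fun x => ses.inj1 ?_
    have h1 : TwoHom.f1 ses.a (connF0 ses σ1 σ0 hσ1 hσ0 (X.d1 x))
        = σ1 (X.d0 (X.d1 x)) - Z.d0 (σ0 (X.d1 x)) := connF0_spec ses σ1 σ0 hσ1 hσ0 (X.d1 x)
    have hdd : X.d0 (X.d1 x) = 0 := mcongr X.dd1 x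
    rw [hdd, map_zero, zero_sub] at h1
    have hac : TwoHom.f1 ses.a (-(X.d1 (connF1 ses σ1 σ0 hσ1 hσ0 x)) : (starCx X).X1)
        = Z.d0 (TwoHom.f0 ses.a (connF1 ses σ1 σ0 hσ1 hσ0 x)) :=
      mcongr ses.a.comm0 (connF1 ses σ1 σ0 hσ1 hσ0 x)
    rw [map_neg] at hac
    have h2 : TwoHom.f1 ses.a (X.d1 (connF1 ses σ1 σ0 hσ1 hσ0 x))
        = -Z.d0 (σ0 (X.d1 x)) := by
      rw [neg_eq_iff_eq_neg] at hac
      rw [hac, connF1_spec ses σ1 σ0 hσ1 hσ0, map_sub]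
      have hz : Z.d0 (Z.d1 (σ1 x)) = 0 := mcongr Z.dd1 (σ1 x)
      rw [hz, sub_zero]
    show TwoHom.f1 ses.a (connF0 ses σ1 σ0 hσ1 hσ0 (X.d1 x))
        = TwoHom.f1 ses.a (X.d1 (connF1 ses σ1 σ0 hσ1 hσ0 x))
    rw [h1, h2]
  comm0 := by
    refine mext fun x => ses.inj0 ?_
    have h1 : TwoHom.f0 ses.a (connF1 ses σ1 σ0 hσ1 hσ0 (X.d0 x))
        = σ0 (X.d1 (X.d0 x)) - Z.d1 (σ1 (X.d0 x)) := connF1_spec ses σ1 σ0 hσ1 hσ0 (X.d0 x)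
    have hdd : X.d1 (X.d0 x) = 0 := mcongr X.dd0 x
    rw [hdd, map_zero, zero_sub] at h1
    have hac : TwoHom.f0 ses.a (-(X.d0 (connF0 ses σ1 σ0 hσ1 hσ0 x)) : (starCx X).X0)
        = Z.d1 (TwoHom.f1 ses.a (connF0 ses σ1 σ0 hσ1 hσ0 x)) :=
      mcongr ses.a.comm1 (connF0 ses σ1 σ0 hσ1 hσ0 x)
    rw [map_neg] at hac
    have h2 : TwoHom.f0 ses.a (X.d0 (connF0 ses σ1 σ0 hσ1 hσ0 x))
        = -Z.d1 (σ1 (X.d0 x)) := by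
      rw [neg_eq_iff_eq_neg] at hac
      rw [hac, connF0_spec ses σ1 σ0 hσ1 hσ0, map_sub]
      have hz : Z.d1 (Z.d0 (σ0 x)) = 0 := mcongr Z.dd0 (σ0 x)
      rw [hz, sub_zero]
    show TwoHom.f0 ses.a (connF1 ses σ1 σ0 hσ1 hσ0 (X.d0 x))
        = TwoHom.f0 ses.a (X.d0 (connF0 ses σ1 σ0 hσ1 hσ0 x))
    rw [h1, h2]

@[simp] theorem conn_f1_apply (x : X.X1) :
    TwoHom.f0 ses.a (TwoHom.f1 (conn ses σ1 σ0 hσ1 hσ0) x) = σ0 (X.d1 x) - Z.d1 (σ1 x) :=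
  connF1_spec ses σ1 σ0 hσ1 hσ0 x

@[simp] theorem conn_f0_apply (x : X.X0) :
    TwoHom.f1 ses.a (TwoHom.f0 (conn ses σ1 σ0 hσ1 hσ0) x) = σ1 (X.d0 x) - Z.d0 (σ0 x) :=
  connF0_spec ses σ1 σ0 hσ1 hσ0 x

end Conn
-- ## I. Compatibilities of the connecting endomorphism
theorem ses_ba_f1 {Y Z X' : TwoCx R} (ses : SESData Y Z X') (y : Y.X1) :
    TwoHom.f1 ses.b (TwoHom.f1 ses.a y) = 0 := by
  have h : TwoHom.f1 ses.a y ∈ LinearMap.ker (TwoHom.f1 ses.b).hom := by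
    rw [← ses.exact1]
    exact ⟨y, rfl⟩
  exact LinearMap.mem_ker.1 h

theorem ses_ba_f0 {Y Z X' : TwoCx R} (ses : SESData Y Z X') (y : Y.X0) :
    TwoHom.f0 ses.b (TwoHom.f0 ses.a y) = 0 := by
  have h : TwoHom.f0 ses.a y ∈ LinearMap.ker (TwoHom.f0 ses.b).hom := by
    rw [← ses.exact0]
    exact ⟨y, rfl⟩
  exact LinearMap.mem_ker.1 h

section Conn2

variable {X Z : TwoCx R} (ses : SESData (starCx X) Z X)
  (σ1 : X.X1 →ₗ[R] Z.X1) (σ0 : X.X0 →ₗ[R] Z.X0)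
  (hσ1 : ∀ x, TwoHom.f1 ses.b (σ1 x) = x) (hσ0 : ∀ x, TwoHom.f0 ses.b (σ0 x) = x)
  (ρ1 : X.X1 →ₗ[R] Z.X1) (ρ0 : X.X0 →ₗ[R] Z.X0)
  (hρ1 : ∀ x, TwoHom.f1 ses.b (ρ1 x) = x) (hρ0 : ∀ x, TwoHom.f0 ses.b (ρ0 x) = x)

include hσ1 hρ1 in
theorem diff_mem1 : ∀ x : X.X1, σ1 x - ρ1 x ∈ LinearMap.range (TwoHom.f1 ses.a).hom := by
  intro x
  rw [ses.exact1, LinearMap.mem_ker, map_sub, hσ1, hρ1]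
  exact sub_self _

include hσ0 hρ0 in
theorem diff_mem0 : ∀ x : X.X0, σ0 x - ρ0 x ∈ LinearMap.range (TwoHom.f0 ses.a).hom := by
  intro x
  rw [ses.exact0, LinearMap.mem_ker, map_sub, hσ0, hρ0]
  exact sub_self _

/-- Lift of the difference of two degree-one splittings along `a¹`. -/
def diffLift1 : X.X1 →ₗ[R] X.X0 :=
  (((LinearEquiv.ofInjective (TwoHom.f1 ses.a).hom ses.inj1).symm.toLinearMap ∘ₗ
    LinearMap.codRestrict (LinearMap.range (TwoHom.f1 ses.a).hom) (σ1 - ρ1)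
      (diff_mem1 ses σ1 hσ1 ρ1 hρ1)) : X.X1 →ₗ[R] X.X0)

/-- Lift of the difference of two degree-zero splittings along `a⁰`. -/
def diffLift0 : X.X0 →ₗ[R] X.X1 :=
  (((LinearEquiv.ofInjective (TwoHom.f0 ses.a).hom ses.inj0).symm.toLinearMap ∘ₗ
    LinearMap.codRestrict (LinearMap.range (TwoHom.f0 ses.a).hom) (σ0 - ρ0)
      (diff_mem0 ses σ0 hσ0 ρ0 hρ0)) : X.X0 →ₗ[R] X.X1)

theorem diffLift1_spec (x : X.X1) :
    TwoHom.f1 ses.a (diffLift1 ses σ1 hσ1 ρ1 hρ1 x) = σ1 x - ρ1 x :=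
  LinearEquiv.ofInjective_symm_apply (f := (TwoHom.f1 ses.a).hom) (h := ses.inj1)
    (LinearMap.codRestrict (LinearMap.range (TwoHom.f1 ses.a).hom) (σ1 - ρ1)
      (diff_mem1 ses σ1 hσ1 ρ1 hρ1) x)

theorem diffLift0_spec (x : X.X0) :
    TwoHom.f0 ses.a (diffLift0 ses σ0 hσ0 ρ0 hρ0 x) = σ0 x - ρ0 x :=
  LinearEquiv.ofInjective_symm_apply (f := (TwoHom.f0 ses.a).hom) (h := ses.inj0)
    (LinearMap.codRestrict (LinearMap.range (TwoHom.f0 ses.a).hom) (σ0 - ρ0)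
      (diff_mem0 ses σ0 hσ0 ρ0 hρ0) x)

/-- Two splittings of the same short exact sequence give homotopic connecting endomorphisms. -/
theorem conn_indep :
    Homotopic (conn ses σ1 σ0 hσ1 hσ0) (conn ses ρ1 ρ0 hρ1 hρ0) := by
  set k1 := diffLift1 ses σ1 hσ1 ρ1 hρ1 with hk1
  set k0 := diffLift0 ses σ0 hσ0 ρ0 hρ0 with hk0
  refine ⟨ModuleCat.ofHom k1, ModuleCat.ofHom k0, mext fun x => ses.inj0 ?_, mext fun x => ses.inj1 ?_⟩
  · show TwoHom.f0 ses.a (TwoHom.f1 (conn ses σ1 σ0 hσ1 hσ0) x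
        - TwoHom.f1 (conn ses ρ1 ρ0 hρ1 hρ0) x)
      = TwoHom.f0 ses.a (X.d0 (k1 x) + k0 (X.d1 x))
    have hd : TwoHom.f0 ses.a (X.d0 (k1 x)) = -Z.d1 (TwoHom.f1 ses.a (k1 x)) := by
      have h : TwoHom.f0 ses.a (-(X.d0 (k1 x)) : (starCx X).X0) = Z.d1 (TwoHom.f1 ses.a (k1 x)) :=
        mcongr ses.a.comm1 (k1 x)
      rw [map_neg] at h
      exact neg_eq_iff_eq_neg.1 h
    rw [map_sub, map_add, conn_f1_apply, conn_f1_apply, hd, diffLift1_spec, diffLift0_spec,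
      map_sub]
    abel
  · show TwoHom.f1 ses.a (TwoHom.f0 (conn ses σ1 σ0 hσ1 hσ0) x
        - TwoHom.f0 (conn ses ρ1 ρ0 hρ1 hρ0) x)
      = TwoHom.f1 ses.a (X.d1 (k0 x) + k1 (X.d0 x))
    have hd : TwoHom.f1 ses.a (X.d1 (k0 x)) = -Z.d0 (TwoHom.f0 ses.a (k0 x)) := by
      have h : TwoHom.f1 ses.a (-(X.d1 (k0 x)) : (starCx X).X1) = Z.d0 (TwoHom.f0 ses.a (k0 x)) :=
        mcongr ses.a.comm0 (k0 x)
      rw [map_neg] at h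
      exact neg_eq_iff_eq_neg.1 h
    rw [map_sub, map_add, conn_f0_apply, conn_f0_apply, hd, diffLift0_spec, diffLift1_spec,
      map_sub]
    abel

/-- The chain map from the cone of the connecting endomorphism to the middle term. -/
def splitHom : coneCx (toDD (conn ses σ1 σ0 hσ1 hσ0)) ⟶ Z where
  f1 := ModuleCat.ofHom ((σ1 ∘ₗ LinearMap.fst R X.X1 X.X0
      + (TwoHom.f1 ses.a).hom ∘ₗ LinearMap.snd R X.X1 X.X0) :
      (X.X1 × X.X0) →ₗ[R] Z.X1)
  f0 := ModuleCat.ofHom ((σ0 ∘ₗ LinearMap.fst R X.X0 X.X1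
      + (TwoHom.f0 ses.a).hom ∘ₗ LinearMap.snd R X.X0 X.X1) :
      (X.X0 × X.X1) →ₗ[R] Z.X0)
  comm1 := by
    refine mext fun p => ?_
    have hg := conn_f1_apply ses σ1 σ0 hσ1 hσ0 p.1
    have ha : TwoHom.f0 ses.a (-(X.d0 p.2) : (starCx X).X0) = Z.d1 (TwoHom.f1 ses.a p.2) :=
      mcongr ses.a.comm1 p.2
    rw [map_neg] at ha
    show σ0 (X.d1 p.1) + TwoHom.f0 ses.a (-(X.d0 p.2)
          - TwoHom.f1 (conn ses σ1 σ0 hσ1 hσ0) p.1)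
        = Z.d1 (σ1 p.1 + TwoHom.f1 ses.a p.2)
    rw [map_sub, map_neg, hg, map_add, ← ha]
    abel
  comm0 := by
    refine mext fun p => ?_
    have hg := conn_f0_apply ses σ1 σ0 hσ1 hσ0 p.1
    have ha : TwoHom.f1 ses.a (-(X.d1 p.2) : (starCx X).X1) = Z.d0 (TwoHom.f0 ses.a p.2) :=
      mcongr ses.a.comm0 p.2
    rw [map_neg] at ha
    show σ1 (X.d0 p.1) + TwoHom.f1 ses.a (-(X.d1 p.2)
          - TwoHom.f0 (conn ses σ1 σ0 hσ1 hσ0) p.1)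
        = Z.d0 (σ0 p.1 + TwoHom.f0 ses.a p.2)
    rw [map_sub, map_neg, hg, map_add, ← ha]
    abel

theorem splitHom_bij1 : Function.Bijective (splitHom ses σ1 σ0 hσ1 hσ0).f1 := by
  constructor
  · intro p q hpq
    have hpq' : σ1 p.1 + TwoHom.f1 ses.a p.2 = σ1 q.1 + TwoHom.f1 ses.a q.2 := hpq
    have h1 : p.1 = q.1 := by
      have hb := congrArg (TwoHom.f1 ses.b) hpq'
      rw [map_add, map_add, hσ1, hσ1, ses_ba_f1, ses_ba_f1, add_zero, add_zero] at hb
      exact hb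
    have h2 : TwoHom.f1 ses.a p.2 = TwoHom.f1 ses.a q.2 := by
      rw [h1] at hpq'
      exact add_left_cancel hpq'
    exact Prod.ext h1 (ses.inj1 h2)
  · intro z
    have hm : z - σ1 (TwoHom.f1 ses.b z) ∈ LinearMap.range (TwoHom.f1 ses.a).hom := by
      rw [ses.exact1, LinearMap.mem_ker, map_sub, hσ1]
      exact sub_self _
    obtain ⟨y, hy⟩ := hm
    refine ⟨(TwoHom.f1 ses.b z, y), ?_⟩
    show σ1 (TwoHom.f1 ses.b z) + TwoHom.f1 ses.a y = z
    rw [hy]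
    abel

theorem splitHom_bij0 : Function.Bijective (splitHom ses σ1 σ0 hσ1 hσ0).f0 := by
  constructor
  · intro p q hpq
    have hpq' : σ0 p.1 + TwoHom.f0 ses.a p.2 = σ0 q.1 + TwoHom.f0 ses.a q.2 := hpq
    have h1 : p.1 = q.1 := by
      have hb := congrArg (TwoHom.f0 ses.b) hpq'
      rw [map_add, map_add, hσ0, hσ0, ses_ba_f0, ses_ba_f0, add_zero, add_zero] at hb
      exact hb
    have h2 : TwoHom.f0 ses.a p.2 = TwoHom.f0 ses.a q.2 := by
      rw [h1] at hpq'
      exact add_left_cancel hpq'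
    exact Prod.ext h1 (ses.inj0 h2)
  · intro z
    have hm : z - σ0 (TwoHom.f0 ses.b z) ∈ LinearMap.range (TwoHom.f0 ses.a).hom := by
      rw [ses.exact0, LinearMap.mem_ker, map_sub, hσ0]
      exact sub_self _
    obtain ⟨y, hy⟩ := hm
    refine ⟨(TwoHom.f0 ses.b z, y), ?_⟩
    show σ0 (TwoHom.f0 ses.b z) + TwoHom.f0 ses.a y = z
    rw [hy]
    abel

/-- The canonical SES on the cone of the connecting endomorphism is equivalent to `ses`. -/
theorem split_equiv : SESEquiv (canonSES (toDD (conn ses σ1 σ0 hσ1 hσ0))) ses := by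
  refine ⟨isoOfBij (splitHom ses σ1 σ0 hσ1 hσ0) (splitHom_bij1 ses σ1 σ0 hσ1 hσ0)
    (splitHom_bij0 ses σ1 σ0 hσ1 hσ0), ?_, ?_⟩
  · refine hom_ext (mext fun y => ?_) (mext fun y => ?_)
    · show σ1 0 + TwoHom.f1 ses.a y = TwoHom.f1 ses.a y
      rw [map_zero, zero_add]
    · show σ0 0 + TwoHom.f0 ses.a y = TwoHom.f0 ses.a y
      rw [map_zero, zero_add]
  · refine hom_ext (mext fun p => ?_) (mext fun p => ?_)
    · show TwoHom.f1 ses.b (σ1 p.1 + TwoHom.f1 ses.a p.2) = p.1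
      rw [map_add, hσ1, ses_ba_f1, add_zero]
    · show TwoHom.f0 ses.b (σ0 p.1 + TwoHom.f0 ses.a p.2) = p.1
      rw [map_add, hσ0, ses_ba_f0, add_zero]

end Conn2

-- ## J. The canonical splitting of the canonical SES computes the original map
theorem conn_canon {X : TwoCx R} (f : X ⟶ X) :
    conn (canonSES (toDD f))
      (LinearMap.inl R X.X1 X.X0 : X.X1 →ₗ[R] (coneCx (toDD f)).X1)
      (LinearMap.inl R X.X0 X.X1 : X.X0 →ₗ[R] (coneCx (toDD f)).X0)
      (fun x => rfl) (fun x => rfl) = f := by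
  refine hom_ext (mext fun x => (canonSES (toDD f)).inj0 ?_)
    (mext fun x => (canonSES (toDD f)).inj1 ?_)
  · erw [conn_f1_apply]
    show ((X.d1 x, 0) : X.X0 × X.X1) - (X.d1 x, -(X.d0 (0 : X.X0)) - TwoHom.f1 f x)
        = ((0, TwoHom.f1 f x) : X.X0 × X.X1)
    refine Prod.ext ?_ ?_ <;> simp
  · erw [conn_f0_apply]
    show ((X.d0 x, 0) : X.X1 × X.X0) - (X.d0 x, -(X.d1 (0 : X.X1)) - TwoHom.f0 f x)
        = ((0, TwoHom.f0 f x) : X.X1 × X.X0)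
    refine Prod.ext ?_ ?_ <;> simp

-- ## K. Transport of the connecting map along an equivalence of extensions
theorem conn_transport {X Z Z' : TwoCx R} (ses : SESData (starCx X) Z X)
    (ses' : SESData (starCx X) Z' X) (e : Z ≅ Z')
    (hea : ses.a ≫ e.hom = ses'.a) (heb : e.hom ≫ ses'.b = ses.b)
    (σ1 : X.X1 →ₗ[R] Z.X1) (σ0 : X.X0 →ₗ[R] Z.X0)
    (hσ1 : ∀ x, TwoHom.f1 ses.b (σ1 x) = x) (hσ0 : ∀ x, TwoHom.f0 ses.b (σ0 x) = x)
    (hτ1 : ∀ x, TwoHom.f1 ses'.b (((TwoHom.f1 e.hom).hom ∘ₗ σ1) x) = x)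
    (hτ0 : ∀ x, TwoHom.f0 ses'.b (((TwoHom.f0 e.hom).hom ∘ₗ σ0) x) = x) :
    conn ses' ((TwoHom.f1 e.hom).hom ∘ₗ σ1)
      ((TwoHom.f0 e.hom).hom ∘ₗ σ0) hτ1 hτ0
      = conn ses σ1 σ0 hσ1 hσ0 := by
  refine hom_ext (mext fun x => ses'.inj0 ?_) (mext fun x => ses'.inj1 ?_)
  · rw [conn_f1_apply]
    have h2 : TwoHom.f0 ses'.a (TwoHom.f1 (conn ses σ1 σ0 hσ1 hσ0) x)
        = TwoHom.f0 e.hom (TwoHom.f0 ses.a (TwoHom.f1 (conn ses σ1 σ0 hσ1 hσ0) x)) := by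
      rw [← hea]
      rfl
    rw [h2, conn_f1_apply, map_sub]
    have h3 : TwoHom.f0 e.hom (Z.d1 (σ1 x)) = Z'.d1 (TwoHom.f1 e.hom (σ1 x)) :=
      mcongr e.hom.comm1 (σ1 x)
    show TwoHom.f0 e.hom (σ0 (X.d1 x)) - Z'.d1 (TwoHom.f1 e.hom (σ1 x)) = _
    rw [← h3]
  · rw [conn_f0_apply]
    have h2 : TwoHom.f1 ses'.a (TwoHom.f0 (conn ses σ1 σ0 hσ1 hσ0) x)
        = TwoHom.f1 e.hom (TwoHom.f1 ses.a (TwoHom.f0 (conn ses σ1 σ0 hσ1 hσ0) x)) := by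
      rw [← hea]
      rfl
    rw [h2, conn_f0_apply, map_sub]
    have h3 : TwoHom.f1 e.hom (Z.d0 (σ0 x)) = Z'.d0 (TwoHom.f0 e.hom (σ0 x)) :=
      mcongr e.hom.comm0 (σ0 x)
    show TwoHom.f1 e.hom (σ1 (X.d0 x)) - Z'.d0 (TwoHom.f0 e.hom (σ0 x)) = _
    rw [← h3]

-- ## L. Homotopic maps have equivalent canonical extensions
theorem htp_sesequiv {X : TwoCx R} {f g : X ⟶ X} (h : Homotopic f g) :
    SESEquiv (canonSES (toDD f)) (canonSES (toDD g)) := by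
  obtain ⟨k1, k0, e1, e0⟩ := h
  have hk1 : ∀ x, TwoHom.f1 f x - TwoHom.f1 g x = X.d0 (k1 x) + k0 (X.d1 x) :=
    fun x => mcongr e1 x
  have hk0 : ∀ x, TwoHom.f0 f x - TwoHom.f0 g x = X.d1 (k0 x) + k1 (X.d0 x) :=
    fun x => mcongr e0 x
  have hcomm1 : ∀ x, TwoHom.f1 f x = X.d0 (k1 x) + k0 (X.d1 x) + TwoHom.f1 g x :=
    fun x => by rw [← hk1 x]; abel
  have hcomm0 : ∀ x, TwoHom.f0 f x = X.d1 (k0 x) + k1 (X.d0 x) + TwoHom.f0 g x :=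
    fun x => by rw [← hk0 x]; abel
  refine ⟨isoOfBij
    (X := coneCx (toDD f)) (Y := coneCx (toDD g))
    { f1 := ModuleCat.ofHom (LinearMap.prod (LinearMap.fst R X.X1 X.X0)
        (LinearMap.snd R X.X1 X.X0 + k1.hom ∘ₗ LinearMap.fst R X.X1 X.X0) :
        (X.X1 × X.X0) →ₗ[R] (X.X1 × X.X0))
      f0 := ModuleCat.ofHom (LinearMap.prod (LinearMap.fst R X.X0 X.X1)
        (LinearMap.snd R X.X0 X.X1 + k0.hom ∘ₗ LinearMap.fst R X.X0 X.X1) :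
        (X.X0 × X.X1) →ₗ[R] (X.X0 × X.X1))
      comm1 := ?_
      comm0 := ?_ } ?_ ?_, ?_, ?_⟩
  · refine mext fun (p : X.X1 × X.X0) => ?_
    refine Prod.ext ?_ ?_
    · show X.d1 p.1 = X.d1 p.1
      rfl
    · show (-(X.d0 p.2) - TwoHom.f1 f p.1) + k0 (X.d1 p.1)
          = -(X.d0 (p.2 + k1 p.1)) - TwoHom.f1 g p.1
      rw [map_add, hcomm1 p.1]
      abel
  · refine mext fun (p : X.X0 × X.X1) => ?_
    refine Prod.ext ?_ ?_
    · show X.d0 p.1 = X.d0 p.1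
      rfl
    · show (-(X.d1 p.2) - TwoHom.f0 f p.1) + k1 (X.d0 p.1)
          = -(X.d1 (p.2 + k0 p.1)) - TwoHom.f0 g p.1
      rw [map_add, hcomm0 p.1]
      abel
  · refine Function.bijective_iff_has_inverse.2
      ⟨fun (z : X.X1 × X.X0) => (z.1, z.2 - k1 z.1),
        fun (p : X.X1 × X.X0) => ?_, fun (z : X.X1 × X.X0) => ?_⟩
    · show ((p.1, (p.2 + k1 p.1) - k1 p.1) : X.X1 × X.X0) = p
      refine Prod.ext rfl ?_
      show (p.2 + k1 p.1) - k1 p.1 = p.2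
      abel
    · show ((z.1, (z.2 - k1 z.1) + k1 z.1) : X.X1 × X.X0) = z
      refine Prod.ext rfl ?_
      show (z.2 - k1 z.1) + k1 z.1 = z.2
      abel
  · refine Function.bijective_iff_has_inverse.2
      ⟨fun (z : X.X0 × X.X1) => (z.1, z.2 - k0 z.1),
        fun (p : X.X0 × X.X1) => ?_, fun (z : X.X0 × X.X1) => ?_⟩
    · show ((p.1, (p.2 + k0 p.1) - k0 p.1) : X.X0 × X.X1) = p
      refine Prod.ext rfl ?_
      show (p.2 + k0 p.1) - k0 p.1 = p.2
      abel
    · show ((z.1, (z.2 - k0 z.1) + k0 z.1) : X.X0 × X.X1) = z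
      refine Prod.ext rfl ?_
      show (z.2 - k0 z.1) + k0 z.1 = z.2
      abel
  · refine hom_ext (mext fun (y : X.X0) => ?_) (mext fun (y : X.X1) => ?_)
    · show (((0 : X.X1), y + k1 0) : X.X1 × X.X0) = ((0, y) : X.X1 × X.X0)
      refine Prod.ext rfl ?_
      show y + k1 0 = y
      rw [map_zero, add_zero]
    · show (((0 : X.X0), y + k0 0) : X.X0 × X.X1) = ((0, y) : X.X0 × X.X1)
      refine Prod.ext rfl ?_
      show y + k0 0 = y
      rw [map_zero, add_zero]
  · refine hom_ext (mext fun p => ?_) (mext fun p => ?_)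
    · rfl
    · rfl

-- ## M. `SESEquiv` is symmetric and transitive
theorem sesEquiv_symm {X Z Z' : TwoCx R} {s : SESData (starCx X) Z X}
    {t : SESData (starCx X) Z' X} (h : SESEquiv s t) : SESEquiv t s := by
  obtain ⟨e, h1, h2⟩ := h
  refine ⟨e.symm, ?_, ?_⟩
  · rw [← h1, Category.assoc, Iso.symm_hom, e.hom_inv_id, Category.comp_id]
  · rw [← h2, ← Category.assoc, Iso.symm_hom, e.inv_hom_id, Category.id_comp]

theorem sesEquiv_trans {X Z Z' Z'' : TwoCx R} {s : SESData (starCx X) Z X}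
    {t : SESData (starCx X) Z' X} {u : SESData (starCx X) Z'' X}
    (h : SESEquiv s t) (h' : SESEquiv t u) : SESEquiv s u := by
  obtain ⟨e, h1, h2⟩ := h
  obtain ⟨e', h1', h2'⟩ := h'
  refine ⟨e ≪≫ e', ?_, ?_⟩
  · show s.a ≫ e.hom ≫ e'.hom = u.a
    rw [← Category.assoc, h1, h1']
  · show (e.hom ≫ e'.hom) ≫ u.b = s.b
    rw [Category.assoc, h2', h2]
-- ## N. Choice of splittings
/-- A choice of degree-one splitting of the surjection `b`. -/
def spl1 {X Z : TwoCx R} (ses : SESData (starCx X) Z X) : X.X1 →ₗ[R] Z.X1 :=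
  haveI := X.proj1
  Classical.choose (Module.projective_lifting_property (TwoHom.f1 ses.b).hom
    LinearMap.id ses.surj1)

theorem spl1_spec {X Z : TwoCx R} (ses : SESData (starCx X) Z X) :
    ∀ x, TwoHom.f1 ses.b (spl1 ses x) = x := by
  intro x
  haveI := X.proj1
  have h := Classical.choose_spec (Module.projective_lifting_property (TwoHom.f1 ses.b).hom
    (LinearMap.id : X.X1 →ₗ[R] X.X1) ses.surj1)
  exact LinearMap.congr_fun h x

/-- A choice of degree-zero splitting of the surjection `b`. -/
def spl0 {X Z : TwoCx R} (ses : SESData (starCx X) Z X) : X.X0 →ₗ[R] Z.X0 :=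
  haveI := X.proj0
  Classical.choose (Module.projective_lifting_property (TwoHom.f0 ses.b).hom
    LinearMap.id ses.surj0)

theorem spl0_spec {X Z : TwoCx R} (ses : SESData (starCx X) Z X) :
    ∀ x, TwoHom.f0 ses.b (spl0 ses x) = x := by
  intro x
  haveI := X.proj0
  have h := Classical.choose_spec (Module.projective_lifting_property (TwoHom.f0 ses.b).hom
    (LinearMap.id : X.X0 →ₗ[R] X.X0) ses.surj0)
  exact LinearMap.congr_fun h x

/-- The connecting endomorphism computed from a chosen splitting. -/
def connOf {X Z : TwoCx R} (ses : SESData (starCx X) Z X) : X ⟶ X :=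
  conn ses (spl1 ses) (spl0 ses) (spl1_spec ses) (spl0_spec ses)

instance KFun_full : (KFun R).Full := Quotient.full_functor (htpRel R)

-- ## O. The two maps of the bijection
section MainAssembly

variable (X : TwoCx R) (hX : RadicalCx X)
  [Module.Finite R X.X1] [Module.Finite R X.X0]
  [IsNoetherian R X.X1] [IsNoetherian R X.X0]

abbrev SubtL := {s : Σ Z : TwoCx R, SESData (starCx X) Z X //
  Nonempty (s.1 ≅ dsum (kP X.X1 X.fin1 X.proj1) (kS X.X0 X.fin0 X.proj0))}

abbrev relL : SubtL X → SubtL X → Prop := fun s t => SESEquiv s.1.2 t.1.2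

include hX in
theorem connOf_bij (s : SubtL X) :
    Function.Bijective (TwoHom.f1 (connOf s.1.2)) ∧
      Function.Bijective (TwoHom.f0 (connOf s.1.2)) := by
  obtain ⟨eD⟩ := s.2
  obtain ⟨eZ, -, -⟩ := split_equiv s.1.2 (spl1 s.1.2) (spl0 s.1.2)
    (spl1_spec s.1.2) (spl0_spec s.1.2)
  have hcontr : Contractible (coneCx (toDD (connOf s.1.2))) :=
    contr_of_iso ((DcIso X) ≪≫ eD.symm ≪≫ eZ.symm) (contr_Dc X)
  exact bij_of_cone_contr hX _ hcontr

/-- From extensions to homotopy automorphisms. -/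
def PsiAux (s : SubtL X) : Aut ((KFun R).obj X) :=
  (KFun R).mapIso (isoOfBij (connOf s.1.2) (connOf_bij X hX s).1 (connOf_bij X hX s).2)

theorem Psi_desc : ∀ s t : SubtL X, relL X s t → PsiAux X hX s = PsiAux X hX t := by
  intro s t hst
  refine Iso.ext ?_
  show (KFun R).map (connOf s.1.2) = (KFun R).map (connOf t.1.2)
  refine CategoryTheory.Quotient.sound _ ?_
  obtain ⟨e, hea, heb⟩ := hst
  have hτ1 : ∀ x, TwoHom.f1 t.1.2.b
      (((TwoHom.f1 e.hom).hom ∘ₗ spl1 s.1.2) x) = x := by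
    intro x
    have hb : TwoHom.f1 t.1.2.b (TwoHom.f1 e.hom (spl1 s.1.2 x))
        = TwoHom.f1 s.1.2.b (spl1 s.1.2 x) :=
      mcongr (congrArg TwoHom.f1 heb) (spl1 s.1.2 x)
    show TwoHom.f1 t.1.2.b (TwoHom.f1 e.hom (spl1 s.1.2 x)) = x
    rw [hb, spl1_spec]
  have hτ0 : ∀ x, TwoHom.f0 t.1.2.b
      (((TwoHom.f0 e.hom).hom ∘ₗ spl0 s.1.2) x) = x := by
    intro x
    have hb : TwoHom.f0 t.1.2.b (TwoHom.f0 e.hom (spl0 s.1.2 x))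
        = TwoHom.f0 s.1.2.b (spl0 s.1.2 x) :=
      mcongr (congrArg TwoHom.f0 heb) (spl0 s.1.2 x)
    show TwoHom.f0 t.1.2.b (TwoHom.f0 e.hom (spl0 s.1.2 x)) = x
    rw [hb, spl0_spec]
  have ht := conn_transport s.1.2 t.1.2 e hea heb (spl1 s.1.2) (spl0 s.1.2)
    (spl1_spec s.1.2) (spl0_spec s.1.2) hτ1 hτ0
  have hi := conn_indep t.1.2
    ((TwoHom.f1 e.hom).hom ∘ₗ spl1 s.1.2)
    ((TwoHom.f0 e.hom).hom ∘ₗ spl0 s.1.2) hτ1 hτ0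
    (spl1 t.1.2) (spl0 t.1.2) (spl1_spec t.1.2) (spl0_spec t.1.2)
  rw [ht] at hi
  exact hi

include hX in
theorem preimage_bij (α : Aut ((KFun R).obj X)) :
    Function.Bijective (TwoHom.f1 ((KFun R).preimage α.hom)) ∧
      Function.Bijective (TwoHom.f0 ((KFun R).preimage α.hom)) := by
  have h1 : (KFun R).map ((KFun R).preimage α.hom ≫ (KFun R).preimage α.inv)
      = (KFun R).map (𝟙 X) := by
    rw [Functor.map_comp, Functor.map_preimage, Functor.map_preimage, α.hom_inv_id,
      CategoryTheory.Functor.map_id]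
  have h2 : (KFun R).map ((KFun R).preimage α.inv ≫ (KFun R).preimage α.hom)
      = (KFun R).map (𝟙 X) := by
    rw [Functor.map_comp, Functor.map_preimage, Functor.map_preimage, α.inv_hom_id,
      CategoryTheory.Functor.map_id]
  exact bij_of_htp hX ((Quotient.functor_map_eq_iff (htpRel R) _ _).1 h1)
    ((Quotient.functor_map_eq_iff (htpRel R) _ _).1 h2)

/-- From homotopy automorphisms to extensions. -/
def PhiAux (α : Aut ((KFun R).obj X)) : Quot (relL X) :=
  Quot.mk _ ⟨⟨coneCx (toDD ((KFun R).preimage α.hom)),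
      canonSES (toDD ((KFun R).preimage α.hom))⟩,
    ⟨(stdConeIso ((KFun R).preimage α.hom) (preimage_bij X hX α).1
        (preimage_bij X hX α).2).symm ≪≫ DcIso X⟩⟩

theorem Psi_Phi (α : Aut ((KFun R).obj X)) :
    Quot.lift (PsiAux X hX) (Psi_desc X hX) (PhiAux X hX α) = α := by
  refine Iso.ext ?_
  show (KFun R).map (connOf (canonSES (toDD ((KFun R).preimage α.hom)))) = α.hom
  have hi := conn_indep (canonSES (toDD ((KFun R).preimage α.hom)))
    (spl1 _) (spl0 _) (spl1_spec _) (spl0_spec _)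
    (LinearMap.inl R X.X1 X.X0 : X.X1 →ₗ[R] (coneCx (toDD ((KFun R).preimage α.hom))).X1)
    (LinearMap.inl R X.X0 X.X1 : X.X0 →ₗ[R] (coneCx (toDD ((KFun R).preimage α.hom))).X0)
    (fun x => rfl) (fun x => rfl)
  rw [conn_canon] at hi
  have hmap : (KFun R).map (connOf (canonSES (toDD ((KFun R).preimage α.hom))))
      = (KFun R).map ((KFun R).preimage α.hom) :=
    CategoryTheory.Quotient.sound _ hi
  rw [hmap, Functor.map_preimage]

theorem Phi_Psi (s : SubtL X) :
    PhiAux X hX (Quot.lift (PsiAux X hX) (Psi_desc X hX) (Quot.mk (relL X) s))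
      = Quot.mk (relL X) s := by
  refine Quot.sound ?_
  have hmapeq : (KFun R).map ((KFun R).preimage (PsiAux X hX s).hom)
      = (KFun R).map (connOf s.1.2) := by
    rw [Functor.map_preimage]
    rfl
  have hf' := (Quotient.functor_map_eq_iff (htpRel R) _ _).1 hmapeq
  exact sesEquiv_trans (htp_sesequiv hf')
    (split_equiv s.1.2 (spl1 s.1.2) (spl0 s.1.2) (spl1_spec s.1.2) (spl0_spec s.1.2))

include hX in
theorem key : Nonempty (Quot (relL X) ≃ Aut ((KFun R).obj X)) := by
  refine ⟨{
    toFun := Quot.lift (PsiAux X hX) (Psi_desc X hX)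
    invFun := PhiAux X hX
    left_inv := Quot.ind
      (β := fun q => PhiAux X hX (Quot.lift (PsiAux X hX) (Psi_desc X hX) q) = q)
      (Phi_Psi X hX)
    right_inv := Psi_Phi X hX }⟩

end MainAssembly

end ProofSection

/-- For a radical object `X` of `C₂(P)`, the set
`Ext¹_{C₂(P)}(X, X^*)_{K_{X¹} ⊕ K^*_{X⁰}}` of equivalence classes of short exact sequences
`0 → X^* → Z → X → 0` with middle term isomorphic to `K_{X¹} ⊕ K^*_{X⁰}` is in bijection
with the automorphism group of `X` in `K₂(P)`. -/
theorem statement_9 {A : Type u} [Ring A] [Algebra ℂ A] [FiniteDimensional ℂ A]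
    (X : TwoCx Aᵐᵒᵖ) (hX : RadicalCx X) :
    Nonempty
      (Quot (fun s t : {s : Σ Z : TwoCx Aᵐᵒᵖ, SESData (starCx X) Z X //
            Nonempty (s.1 ≅ dsum (kP X.X1 X.fin1 X.proj1) (kS X.X0 X.fin0 X.proj0))} =>
          SESEquiv s.1.2 t.1.2) ≃
        Aut ((KFun Aᵐᵒᵖ).obj X)) := by
  haveI hNC : IsNoetherian ℂ Aᵐᵒᵖ := IsNoetherian.iff_fg.2 inferInstance
  haveI hNR : IsNoetherianRing Aᵐᵒᵖ := isNoetherian_of_tower ℂ hNC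
  haveI := X.fin1
  haveI := X.fin0
  haveI : IsNoetherian Aᵐᵒᵖ X.X1 := inferInstance
  haveI : IsNoetherian Aᵐᵒᵖ X.X0 := inferInstance
  exact key X hX
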